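/- arXiv:1711.03060 — 5 statements merged into one kernel-verified Lean document; each statement's English description precedes it below -/
import Mathlib

section
/- Let γ > 1/2, s₀ > 0 and λ ∈ ℂ. Suppose f : [s₀,∞) → ℂ is twice continuously differentiable, not identically zero, satisfies −f''(s) + (γ(γ+1)/s² + i s) f(s) = λ f(s) for all s ≥ s₀, f(s₀) = 0, ∫_{s₀}^∞ (1+s)|f(s)|² ds < ∞, ∫_{s₀}^∞ |f'(s)|² ds < ∞, and f'(s)·conj(f(s)) → 0 as s → ∞. Then Re λ + Im λ ≥ min_{s>0} ( s + γ(γ+1)/s² ). In particular, if |λ| is smaller than half of this minimum, no such solution can vanish at any point where it is defined. -/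
open MeasureTheory Set

/-- A nontrivial solution of `−f'' + (γ(γ+1)/s² + is) f = λ f` on `[s₀,∞)`
vanishing at `s₀`, square integrable with weight `(1+s)` together with its derivative, and
with `f'·conj f → 0` at infinity, forces `Re λ + Im λ ≥ min_{s>0}(s + γ(γ+1)/s²)`.
In particular no such vanishing solution exists when `|λ|` is smaller than half this minimum. -/
theorem stmt2
    (γ : ℝ) (hγ : 1 / 2 < γ) (s₀ : ℝ) (hs₀ : 0 < s₀) (l : ℂ)
    (f : ℝ → ℂ)
    (hreg : ContDiffOn ℝ 2 f (Ici s₀))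
    (hne : ¬ ∀ s ∈ Ici s₀, f s = 0)
    (hODE : ∀ s ∈ Ici s₀,
      -(derivWithin (derivWithin f (Ici s₀)) (Ici s₀) s)
        + ((γ * (γ + 1) / s ^ 2 : ℝ) + Complex.I * (s : ℂ)) * f s = l * f s)
    (hvan : f s₀ = 0)
    (hint : IntegrableOn (fun s : ℝ => (1 + s) * ‖f s‖ ^ 2) (Ici s₀))
    (hint' : IntegrableOn (fun s : ℝ => ‖derivWithin f (Ici s₀) s‖ ^ 2) (Ici s₀))
    (hlim : Filter.Tendsto (fun s : ℝ => derivWithin f (Ici s₀) s * (starRingEnd ℂ) (f s))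
      Filter.atTop (nhds 0)) :
    sInf ((fun s : ℝ => s + γ * (γ + 1) / s ^ 2) '' Ioi 0) ≤ l.re + l.im
    ∧ ¬ (‖l‖ < sInf ((fun s : ℝ => s + γ * (γ + 1) / s ^ 2) '' Ioi 0) / 2) := by
  
  have hγ0 : 0 < γ * (γ + 1) := by nlinarith
  set m : ℝ := sInf ((fun s : ℝ => s + γ * (γ + 1) / s ^ 2) '' Ioi 0) with hm
  have hSbdd : BddBelow ((fun s : ℝ => s + γ * (γ + 1) / s ^ 2) '' Ioi 0) := by
    refine ⟨0, ?_⟩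
    rintro x ⟨s, hs, rfl⟩
    have hs' : (0:ℝ) < s := hs
    have := div_pos hγ0 (pow_pos hs' 2)
    dsimp only
    linarith
  have hmle : ∀ s : ℝ, 0 < s → m ≤ s + γ * (γ + 1) / s ^ 2 := fun s hs =>
    csInf_le hSbdd ⟨s, hs, rfl⟩
  -- notations
  set g : ℝ → ℂ := derivWithin f (Ici s₀) with hgdef
  set g' : ℝ → ℂ := derivWithin g (Ici s₀) with hg'def
  have hU : UniqueDiffOn ℝ (Ici s₀) := uniqueDiffOn_Ici s₀
  have hfC : ContinuousOn f (Ici s₀) := hreg.continuousOn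
  have hg1 : ContDiffOn ℝ 1 g (Ici s₀) := hreg.derivWithin hU (by norm_num)
  have hgC : ContinuousOn g (Ici s₀) := hg1.continuousOn
  have hg'C : ContinuousOn g' (Ici s₀) := hg1.continuousOn_derivWithin hU le_rfl
  have hfd : ∀ s ∈ Ici s₀, HasDerivWithinAt f (g s) (Ici s₀) s := fun s hs =>
    ((hreg.differentiableOn (by norm_num)) s hs).hasDerivWithinAt
  have hgd : ∀ s ∈ Ici s₀, HasDerivWithinAt g (g' s) (Ici s₀) s := fun s hs =>
    ((hg1.differentiableOn (by norm_num)) s hs).hasDerivWithinAt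
  have hODE' : ∀ s ∈ Ici s₀,
      g' s = ((γ * (γ + 1) / s ^ 2 : ℝ) + Complex.I * (s : ℂ)) * f s - l * f s := by
    intro s hs
    have := hODE s hs
    linear_combination -this
  -- real auxiliary functions
  set φ : ℝ → ℝ := fun s => ‖f s‖ ^ 2 with hφdef
  set ψ : ℝ → ℝ := fun s => ‖g s‖ ^ 2 with hψdef
  have hφ0 : ∀ s, 0 ≤ φ s := fun s => sq_nonneg _
  have hφCm : AEStronglyMeasurable φ (volume.restrict (Ici s₀)) :=
    ((hfC.norm.pow 2)).aestronglyMeasurable measurableSet_Ici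
  have hφInt : IntegrableOn φ (Ici s₀) := by
    refine hint.mono' hφCm ?_
    filter_upwards [ae_restrict_mem measurableSet_Ici] with s hs
    have h1 : (1:ℝ) ≤ 1 + s := by simp only [mem_Ici] at hs; linarith
    have := hφ0 s
    rw [Real.norm_eq_abs, abs_of_nonneg this]
    show φ s ≤ (1 + s) * φ s
    nlinarith
  have hφcont : ContinuousOn φ (Ici s₀) := hfC.norm.pow 2
  have hsφInt : IntegrableOn (fun s => s * φ s) (Ici s₀) := by
    refine hint.mono'
      ((continuousOn_id.mul hφcont).aestronglyMeasurable measurableSet_Ici) ?_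
    filter_upwards [ae_restrict_mem measurableSet_Ici] with s hs
    simp only [mem_Ici] at hs
    have h0 : 0 ≤ s := le_trans hs₀.le hs
    have := hφ0 s
    rw [Real.norm_eq_abs, abs_of_nonneg (by positivity)]
    show s * φ s ≤ (1 + s) * φ s
    nlinarith
  have hwcont : ContinuousOn (fun s : ℝ => γ * (γ + 1) / s ^ 2) (Ici s₀) := by
    apply continuousOn_const.div (continuousOn_id.pow 2)
    intro s hs
    have : 0 < s := lt_of_lt_of_le hs₀ hs
    exact pow_ne_zero 2 (ne_of_gt this)
  have hcφInt : IntegrableOn (fun s => γ * (γ + 1) / s ^ 2 * φ s) (Ici s₀) := by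
    refine (hφInt.const_mul (γ * (γ + 1) / s₀ ^ 2)).mono'
      ((hwcont.mul hφcont).aestronglyMeasurable measurableSet_Ici) ?_
    filter_upwards [ae_restrict_mem measurableSet_Ici] with s hs
    simp only [mem_Ici] at hs
    have h0 : 0 < s := lt_of_lt_of_le hs₀ hs
    have hle : γ * (γ + 1) / s ^ 2 ≤ γ * (γ + 1) / s₀ ^ 2 := by gcongr
    rw [Real.norm_eq_abs, abs_of_nonneg (by positivity)]
    exact mul_le_mul_of_nonneg_right hle (hφ0 s)
  have hψInt : IntegrableOn ψ (Ici s₀) := hint'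
  -- restrict to Ioi
  have hφI : IntegrableOn φ (Ioi s₀) := hφInt.mono_set Ioi_subset_Ici_self
  have hsφI : IntegrableOn (fun s => s * φ s) (Ioi s₀) := hsφInt.mono_set Ioi_subset_Ici_self
  have hcφI : IntegrableOn (fun s => γ * (γ + 1) / s ^ 2 * φ s) (Ioi s₀) :=
    hcφInt.mono_set Ioi_subset_Ici_self
  have hψI : IntegrableOn ψ (Ioi s₀) := hψInt.mono_set Ioi_subset_Ici_self
  set N : ℝ := ∫ s in Ioi s₀, φ s with hN
  set A : ℝ := ∫ s in Ioi s₀, γ * (γ + 1) / s ^ 2 * φ s with hA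
  set B : ℝ := ∫ s in Ioi s₀, s * φ s with hB
  set P : ℝ := ∫ s in Ioi s₀, ψ s with hP
  -- complex integrand
  set q : ℝ → ℂ := fun s =>
    ((γ * (γ + 1) / s ^ 2 * φ s : ℝ) : ℂ) + Complex.I * ((s * φ s : ℝ) : ℂ)
      + (-l) * ((φ s : ℝ) : ℂ) + ((ψ s : ℝ) : ℂ) with hqdef
  have i1 : Integrable (fun s : ℝ => ((γ * (γ + 1) / s ^ 2 * φ s : ℝ) : ℂ))
      (volume.restrict (Ioi s₀)) := hcφI.ofReal
  have i2 : Integrable (fun s : ℝ => Complex.I * ((s * φ s : ℝ) : ℂ))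
      (volume.restrict (Ioi s₀)) := hsφI.ofReal.const_mul _
  have i3 : Integrable (fun s : ℝ => (-l) * ((φ s : ℝ) : ℂ))
      (volume.restrict (Ioi s₀)) := hφI.ofReal.const_mul _
  have i4 : Integrable (fun s : ℝ => ((ψ s : ℝ) : ℂ))
      (volume.restrict (Ioi s₀)) := hψI.ofReal
  have i12 : Integrable (fun s : ℝ => ((γ * (γ + 1) / s ^ 2 * φ s : ℝ) : ℂ)
      + Complex.I * ((s * φ s : ℝ) : ℂ)) (volume.restrict (Ioi s₀)) := i1.add i2
  have i123 : Integrable (fun s : ℝ => ((γ * (γ + 1) / s ^ 2 * φ s : ℝ) : ℂ)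
      + Complex.I * ((s * φ s : ℝ) : ℂ) + (-l) * ((φ s : ℝ) : ℂ))
      (volume.restrict (Ioi s₀)) := i12.add i3
  have hqInt : IntegrableOn q (Ioi s₀) := i123.add i4
  have hqval : ∫ s in Ioi s₀, q s = (A : ℂ) + Complex.I * B + (-l) * N + P := by
    simp only [hqdef]
    rw [integral_add i123 i4, integral_add i12 i3, integral_add i1 i2,
        integral_const_mul, integral_const_mul,
        show (∫ a in Ioi s₀, ((γ * (γ + 1) / a ^ 2 * φ a : ℝ) : ℂ)) = ((A : ℝ) : ℂ) from
          integral_ofReal,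
        show (∫ a in Ioi s₀, ((a * φ a : ℝ) : ℂ)) = ((B : ℝ) : ℂ) from integral_ofReal,
        show (∫ a in Ioi s₀, ((φ a : ℝ) : ℂ)) = ((N : ℝ) : ℂ) from integral_ofReal,
        show (∫ a in Ioi s₀, ((ψ a : ℝ) : ℂ)) = ((P : ℝ) : ℂ) from integral_ofReal]
  -- the pointwise identity
  have hpt : ∀ s ∈ Ioi s₀, g' s * (starRingEnd ℂ) (f s) + g s * (starRingEnd ℂ) (g s) = q s := by
    intro s hs
    have hs' : s ∈ Ici s₀ := mem_Ici.mpr (le_of_lt hs)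
    have hff : f s * (starRingEnd ℂ) (f s) = ((φ s : ℝ) : ℂ) := by
      rw [Complex.mul_conj, Complex.normSq_eq_norm_sq, hφdef]
    have hgg : g s * (starRingEnd ℂ) (g s) = ((ψ s : ℝ) : ℂ) := by
      rw [Complex.mul_conj, Complex.normSq_eq_norm_sq, hψdef]
    rw [hODE' s hs', hqdef]
    push_cast
    linear_combination ((γ:ℂ) * ((γ:ℂ) + 1) / (s:ℂ) ^ 2 + Complex.I * (s:ℂ) - l) * hff + hgg
  -- FTC on finite intervals
  have key : ∀ T, s₀ ≤ T →
      ∫ s in s₀..T, (g' s * (starRingEnd ℂ) (f s) + g s * (starRingEnd ℂ) (g s))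
        = g T * (starRingEnd ℂ) (f T) := by
    intro T hT
    have hconjC : ContinuousOn (fun s => (starRingEnd ℂ) (f s)) (Ici s₀) :=
      Complex.continuous_conj.comp_continuousOn hfC
    have hFc : ContinuousOn (fun s => g s * (starRingEnd ℂ) (f s)) (Icc s₀ T) :=
      (hgC.mono Icc_subset_Ici_self).mul (hconjC.mono Icc_subset_Ici_self)
    have hFder : ∀ x ∈ Ioo s₀ T,
        HasDerivWithinAt (fun s => g s * (starRingEnd ℂ) (f s))
          (g' x * (starRingEnd ℂ) (f x) + g x * (starRingEnd ℂ) (g x)) (Ioi x) x := by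
      intro x hx
      have hmem : Ici s₀ ∈ nhds x := Ici_mem_nhds hx.1
      have h1 : HasDerivAt f (g x) x := (hfd x (le_of_lt hx.1)).hasDerivAt hmem
      have h2 : HasDerivAt g (g' x) x := (hgd x (le_of_lt hx.1)).hasDerivAt hmem
      have h3 : HasDerivAt (fun s => (starRingEnd ℂ) (f s)) ((starRingEnd ℂ) (g x)) x := by
        simpa using h1.star
      exact (h2.mul h3).hasDerivWithinAt
    have hIc : IntervalIntegrable
        (fun s => g' s * (starRingEnd ℂ) (f s) + g s * (starRingEnd ℂ) (g s)) volume s₀ T := by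
      apply ContinuousOn.intervalIntegrable_of_Icc hT
      exact ((hg'C.mono Icc_subset_Ici_self).mul
          (Complex.continuous_conj.comp_continuousOn (hfC.mono Icc_subset_Ici_self))).add
        ((hgC.mono Icc_subset_Ici_self).mul
          (Complex.continuous_conj.comp_continuousOn (hgC.mono Icc_subset_Ici_self)))
    rw [intervalIntegral.integral_eq_sub_of_hasDeriv_right_of_le hT hFc hFder hIc]
    simp [hvan]
  -- integrability of the integrand over Ioi
  have hhI : IntegrableOn
      (fun s => g' s * (starRingEnd ℂ) (f s) + g s * (starRingEnd ℂ) (g s)) (Ioi s₀) :=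
    hqInt.congr_fun (fun s hs => (hpt s hs).symm) measurableSet_Ioi
  have htend1 : Filter.Tendsto
      (fun T => ∫ s in s₀..T, (g' s * (starRingEnd ℂ) (f s) + g s * (starRingEnd ℂ) (g s)))
      Filter.atTop
      (nhds (∫ s in Ioi s₀, (g' s * (starRingEnd ℂ) (f s) + g s * (starRingEnd ℂ) (g s)))) :=
    intervalIntegral_tendsto_integral_Ioi s₀ hhI Filter.tendsto_id
  have htend2 : Filter.Tendsto
      (fun T => ∫ s in s₀..T, (g' s * (starRingEnd ℂ) (f s) + g s * (starRingEnd ℂ) (g s)))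
      Filter.atTop (nhds 0) := by
    apply hlim.congr'
    filter_upwards [Filter.eventually_ge_atTop s₀] with T hT
    exact (key T hT).symm
  have hint0 : ∫ s in Ioi s₀, (g' s * (starRingEnd ℂ) (f s) + g s * (starRingEnd ℂ) (g s)) = 0 :=
    tendsto_nhds_unique htend1 htend2
  have hqzero : (A : ℂ) + Complex.I * B + (-l) * N + P = 0 := by
    rw [← hqval, ← hint0]
    exact (setIntegral_congr_fun measurableSet_Ioi hpt).symm
  have hre : A - l.re * N + P = 0 := by
    have := congrArg Complex.re hqzero
    simpa [sub_eq_add_neg] using this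
  have him : B - l.im * N = 0 := by
    have := congrArg Complex.im hqzero
    simpa [sub_eq_add_neg] using this
  -- positivity of N
  have hNpos : 0 < N := by
    push_neg at hne
    obtain ⟨s₁, hs₁, hfs₁⟩ := hne
    have hs₁' : s₀ < s₁ := by
      rcases eq_or_lt_of_le (mem_Ici.mp hs₁) with h | h
      · exact absurd (h ▸ hvan) hfs₁
      · exact h
    rw [hN]
    rw [setIntegral_pos_iff_support_of_nonneg_ae
      (Filter.Eventually.of_forall hφ0) hφI]
    have hφs₁ : 0 < φ s₁ := by
      simp only [hφdef]
      exact pow_pos (norm_pos_iff.mpr hfs₁) 2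
    have hcont : ContinuousAt φ s₁ := (hφcont s₁ hs₁).continuousAt (Ici_mem_nhds hs₁')
    have hpre : φ ⁻¹' Ioi 0 ∈ nhds s₁ := hcont (Ioi_mem_nhds hφs₁)
    obtain ⟨ε, hε, hball⟩ := Metric.mem_nhds_iff.mp hpre
    set a := max s₀ (s₁ - ε / 2) with hadef
    have ha1 : a < s₁ := by
      apply max_lt hs₁'
      linarith
    have ha2 : s₀ ≤ a := le_max_left _ _
    have hsub : Ioo a (s₁ + ε / 2) ⊆ Function.support φ ∩ Ioi s₀ := by
      intro x hx
      have hxball : x ∈ Metric.ball s₁ ε := by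
        rw [Metric.mem_ball, Real.dist_eq, abs_lt]
        constructor
        · have : s₁ - ε / 2 ≤ a := le_max_right _ _
          have := hx.1
          linarith
        · have := hx.2
          linarith
      constructor
      · exact ne_of_gt (hball hxball)
      · exact lt_of_le_of_lt ha2 hx.1
    calc (0:ENNReal) < volume (Ioo a (s₁ + ε / 2)) := by
          rw [Real.volume_Ioo]
          apply ENNReal.ofReal_pos.mpr
          linarith
      _ ≤ volume (Function.support φ ∩ Ioi s₀) := measure_mono hsub
  have hP0 : 0 ≤ P := setIntegral_nonneg measurableSet_Ioi (fun s _ => sq_nonneg _)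
  -- A + B ≥ m N
  have hAB : m * N ≤ A + B := by
    have h1 : ∫ s in Ioi s₀, m * φ s ≤ ∫ s in Ioi s₀, (γ * (γ + 1) / s ^ 2 * φ s + s * φ s) := by
      refine setIntegral_mono_on (hφI.const_mul m)
        (by exact hcφI.add hsφI) measurableSet_Ioi ?_
      intro s hs
      have hs' : 0 < s := lt_trans hs₀ hs
      have := hmle s hs'
      nlinarith [hφ0 s]
    rw [integral_const_mul, integral_add hcφI hsφI] at h1
    exact h1
  have hmain : m ≤ l.re + l.im := by
    by_contra hcon
    push_neg at hcon
    have hlt : (l.re + l.im) * N < m * N := mul_lt_mul_of_pos_right hcon hNpos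
    have hexp : (l.re + l.im) * N = l.re * N + l.im * N := by ring
    linarith
  refine ⟨hmain, ?_⟩
  intro hcon
  have h1 : l.re ≤ ‖l‖ := le_trans (le_abs_self _) (by exact Complex.abs_re_le_norm l)
  have h2 : l.im ≤ ‖l‖ := le_trans (le_abs_self _) (by exact Complex.abs_im_le_norm l)
  linarith
end

section
/- Let α ∈ (0,2) with α ≠ 1. Define h₀ = 1, h_{n+1} = h_n/(n+1−α), F_α(z) = Σ_{n≥0} h_n zⁿ, d_n = (i/9)ⁿ h_n / n!, and D_α(x) = Σ_{n≥0} d_n xⁿ. Then D_α is an entire function, there exists C > 0 such that |D_α(x)| ≤ C e^{C√x} for all x ≥ 0, and for every t ∈ ℂ with Re t > 0 one has ∫₀^∞ e^{−x/t} D_α(x) dx = t · F_α(i t/9). -/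
open MeasureTheory Set

/-- The sequence `h₀ = 1`, `h_{n+1} = h_n / (n+1−α)`. -/
noncomputable def hseq (α : ℝ) : ℕ → ℝ
  | 0 => 1
  | (n + 1) => hseq α n / ((n : ℝ) + 1 - α)

/-- `F_α(z) = Σ h_n zⁿ`. -/
noncomputable def Fal (α : ℝ) (z : ℂ) : ℂ := ∑' n : ℕ, ((hseq α n : ℝ) : ℂ) * z ^ n

/-- `d_n = (i/9)ⁿ h_n / n!`. -/
noncomputable def dseq (α : ℝ) (n : ℕ) : ℂ :=
  (Complex.I / 9) ^ n * ((hseq α n : ℝ) : ℂ) / (n.factorial : ℂ)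

/-- `D_α(x) = Σ d_n xⁿ`. -/
noncomputable def Dal (α : ℝ) (z : ℂ) : ℂ := ∑' n : ℕ, dseq α n * z ^ n

open Filter

lemma norm_cexp_neg_mul (b : ℂ) (x : ℝ) :
    ‖Complex.exp (-(b * x))‖ = Real.exp (-(b.re * x)) := by
  rw [Complex.norm_exp]
  congr 1
  simp [Complex.mul_re]

lemma tendsto_pow_mul_cexp (n : ℕ) {r : ℝ} (hr : 0 < r) :
    Tendsto (fun x : ℝ => |x| ^ n * Real.exp (-(r * x))) atTop (nhds 0) := by
  have h := tendsto_rpow_mul_exp_neg_mul_atTop_nhds_zero (n : ℝ) r hr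
  refine h.congr' ?_
  filter_upwards [eventually_ge_atTop (0:ℝ)] with x hx
  rw [Real.rpow_natCast, abs_of_nonneg hx, neg_mul]

lemma integrableOn_pow_mul_cexp {b : ℂ} (hb : 0 < b.re) (n : ℕ) :
    IntegrableOn (fun x : ℝ => (x : ℂ) ^ n * Complex.exp (-(b * x))) (Ioi 0) := by
  have hcont : ContinuousOn (fun x : ℝ => (x : ℂ) ^ n * Complex.exp (-(b * x))) (Ici 0) := by
    fun_prop
  refine Iff.mp integrableOn_Ici_iff_integrableOn_Ioi ?_
  refine (hcont.locallyIntegrableOn measurableSet_Ici).integrableOn_of_isBigO_atTop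
    (g := fun x => Real.exp (-(b.re / 2) * x)) ?_
    ⟨Ioi 0, Ioi_mem_atTop 0, exp_neg_integrableOn_Ioi 0 (half_pos hb)⟩
  rw [Asymptotics.isBigO_iff]
  refine ⟨1, ?_⟩
  have h := tendsto_pow_mul_cexp n (half_pos hb)
  have h2 := h.eventually_le_const (by norm_num : (0:ℝ) < 1)
  filter_upwards [h2, eventually_ge_atTop (0:ℝ)] with x hx hx0
  rw [norm_mul, norm_pow, norm_cexp_neg_mul, Complex.norm_real]
  have : Real.exp (-(b.re * x)) = Real.exp (-(b.re/2 * x)) * Real.exp (-(b.re/2*x)) := by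
    rw [← Real.exp_add]; ring_nf
  simp only [this, ← mul_assoc, one_mul, Real.norm_eq_abs, Real.abs_exp, neg_mul]
  have h3 := mul_le_mul_of_nonneg_right hx (Real.exp_pos (-(b.re/2*x))).le
  simpa using h3

lemma tendsto_boundary (n : ℕ) {b : ℂ} (hb : 0 < b.re) :
    Tendsto (fun x : ℝ => -((x:ℂ)^n * Complex.exp (-(b*x))) / b) atTop (nhds 0) := by
  rw [tendsto_zero_iff_norm_tendsto_zero]
  have h := (tendsto_pow_mul_cexp n hb).div_const ‖b‖
  rw [zero_div] at h
  refine h.congr fun x => ?_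
  rw [norm_div, norm_neg, norm_mul, norm_pow, norm_cexp_neg_mul, Complex.norm_real,
    Real.norm_eq_abs]

lemma cexp_hasDerivAt (b : ℂ) (x : ℝ) :
    HasDerivAt (fun x : ℝ => Complex.exp (-(b*x))) (-b * Complex.exp (-(b*x))) x := by
  have h1 : HasDerivAt (fun x : ℝ => -(b*(x:ℂ))) (-b) x := by
    have h := ((Complex.ofRealCLM.hasDerivAt (x := x)).const_mul b).neg
    simp at h
    exact h
  simpa [mul_comm] using h1.cexp

lemma pow_hasDerivAt (m : ℕ) (x : ℝ) :
    HasDerivAt (fun x : ℝ => (x:ℂ)^m) ((m:ℂ) * (x:ℂ)^(m-1)) x := by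
  simpa using (hasDerivAt_pow m ((x:ℝ):ℂ)).comp_ofReal

lemma integral_pow_mul_cexp {b : ℂ} (hb : 0 < b.re) (n : ℕ) :
    ∫ x in Ioi (0:ℝ), (x:ℂ)^n * Complex.exp (-(b*x)) = n.factorial / b^(n+1) := by
  have hb0 : b ≠ 0 := fun h => by simp [h] at hb
  induction n with
  | zero =>
      have key : ∫ x in Ioi (0:ℝ), Complex.exp (-(b*x)) = 0 - (-Complex.exp (-(b*(0:ℝ)))/b) := by
        refine integral_Ioi_of_hasDerivAt_of_tendsto
          (f := fun x : ℝ => -Complex.exp (-(b*x))/b) ?_ (fun x _ => ?_) ?_ ?_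
        · exact (Continuous.continuousWithinAt (by fun_prop))
        · have := ((cexp_hasDerivAt b x).neg).div_const b
          refine HasDerivAt.congr_deriv (by exact this) ?_
          field_simp
        · simpa using integrableOn_pow_mul_cexp hb 0
        · have := tendsto_boundary 0 hb
          simpa using this
      simp only [Complex.ofReal_zero, mul_zero, neg_zero, Complex.exp_zero] at key
      simpa [neg_div] using key
  | succ n IH =>
      have key : (∫ x in Ioi (0:ℝ),
          ((x:ℂ)^(n+1) * Complex.exp (-(b*x))
            - ((n:ℂ)+1)/b * ((x:ℂ)^n * Complex.exp (-(b*x)))))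
          = 0 - (-(((0:ℝ):ℂ)^(n+1) * Complex.exp (-(b*(0:ℝ))))/b) := by
        refine integral_Ioi_of_hasDerivAt_of_tendsto
          (f := fun x : ℝ => -((x:ℂ)^(n+1) * Complex.exp (-(b*x)))/b) ?_ (fun x _ => ?_) ?_ ?_
        · exact (Continuous.continuousWithinAt (by fun_prop))
        · have := (((pow_hasDerivAt (n+1) x).mul (cexp_hasDerivAt b x)).neg).div_const b
          refine HasDerivAt.congr_deriv (by exact this) ?_
          simp only [Nat.add_sub_cancel]
          push_cast
          field_simp
          ring
        · exact (integrableOn_pow_mul_cexp hb (n+1)).sub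
            ((integrableOn_pow_mul_cexp hb n).const_mul _)
        · exact tendsto_boundary (n+1) hb
      rw [integral_sub (integrableOn_pow_mul_cexp hb (n+1))
        ((integrableOn_pow_mul_cexp hb n).const_mul _), MeasureTheory.integral_const_mul, IH] at key
      simp only [Complex.ofReal_zero, zero_pow (Nat.succ_ne_zero n), zero_mul, neg_zero,
        zero_div, sub_zero, zero_sub, neg_neg] at key
      have : (∫ x in Ioi (0:ℝ), (x:ℂ)^(n+1) * Complex.exp (-(b*x)))
          = ((n:ℂ)+1)/b * ((n.factorial : ℂ)/b^(n+1)) := by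
        rw [sub_eq_zero] at key; exact key
      rw [this, Nat.factorial_succ]
      push_cast
      rw [div_mul_div_comm, pow_succ]
      ring

lemma integral_pow_mul_rexp {r : ℝ} (hr : 0 < r) (n : ℕ) :
    ∫ x in Ioi (0:ℝ), x ^ n * Real.exp (-(r * x)) = n.factorial / r ^ (n + 1) := by
  have h := integral_pow_mul_cexp (b := (r:ℂ)) (by simpa using hr) n
  have h2 : ∫ x in Ioi (0:ℝ), ((x ^ n * Real.exp (-(r * x)) : ℝ) : ℂ)
      = ((∫ x in Ioi (0:ℝ), x ^ n * Real.exp (-(r * x)) : ℝ) : ℂ) := integral_ofReal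
  rw [← Complex.ofReal_inj]
  rw [← h2]
  rw [show (((n.factorial : ℝ) / r ^ (n+1) : ℝ) : ℂ) = (n.factorial : ℂ) / (r:ℂ)^(n+1) by
    push_cast; ring]
  rw [← h]
  congr 1
  funext x
  push_cast [Complex.ofReal_exp]
  ring_nf

lemma exp_tsum (y : ℝ) : Real.exp y = ∑' n : ℕ, y ^ n / n.factorial := by
  rw [Real.exp_eq_exp_ℝ, NormedSpace.exp_eq_tsum ℝ]
  simp only [smul_eq_mul]
  exact tsum_congr fun n => (inv_mul_eq_div _ _)

lemma pow_div_factorial_le_exp {y : ℝ} (hy : 0 ≤ y) (n : ℕ) :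
    y ^ n / n.factorial ≤ Real.exp y := by
  rw [exp_tsum]
  exact Summable.le_tsum (Real.summable_pow_div_factorial y) n
    (fun m _ => div_nonneg (pow_nonneg hy m) (Nat.cast_nonneg _))

lemma hseq_bound (α : ℝ) (hα : α ∈ Set.Ioo (0:ℝ) 2) (hα1 : α ≠ 1) :
    ∃ c : ℝ, 0 < c ∧ ∀ n : ℕ, |hseq α n| ≤ 1 / (c ^ n * n.factorial) := by
  obtain ⟨hα0, hα2⟩ := hα
  set c : ℝ := min (|1 - α|) (min ((2 - α)/2) (1/3)) with hc
  have hcpos : 0 < c := by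
    apply lt_min
    · rw [abs_pos, sub_ne_zero]; exact fun h => hα1 h.symm
    · exact lt_min (by linarith) (by norm_num)
  refine ⟨c, hcpos, ?_⟩
  have hkey : ∀ n : ℕ, c * ((n:ℝ) + 1) ≤ |(n:ℝ) + 1 - α| := by
    intro n
    match n with
    | 0 =>
        have h1 : c ≤ |1 - α| := min_le_left _ _
        have h2 : (0:ℝ) ≤ |1 - α| := abs_nonneg _
        push_cast
        rw [zero_add, mul_one]
        exact h1
    | 1 =>
        have h1 : c ≤ (2 - α)/2 := le_trans (min_le_right _ _) (min_le_left _ _)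
        rw [show ((1:ℕ):ℝ) + 1 - α = 2 - α by norm_num, abs_of_pos (by linarith)]
        push_cast; linarith
    | (m+2) =>
        have h1 : c ≤ 1/3 := le_trans (min_le_right _ _) (min_le_right _ _)
        have h2 : (0:ℝ) ≤ (m:ℝ) := Nat.cast_nonneg m
        rw [show ((m+2:ℕ):ℝ) + 1 - α = (m:ℝ) + 3 - α by push_cast; ring,
          abs_of_pos (by linarith)]
        have : c * ((m:ℝ) + 3) ≤ (1/3) * ((m:ℝ) + 3) :=
          mul_le_mul_of_nonneg_right h1 (by linarith)
        push_cast
        nlinarith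
  intro n
  induction n with
  | zero => simp [hseq]
  | succ n IH =>
      have hpos : 0 < |(n:ℝ) + 1 - α| :=
        lt_of_lt_of_le (by positivity) (hkey n)
      rw [hseq, abs_div]
      rw [div_le_iff₀ hpos]
      calc |hseq α n| ≤ 1 / (c ^ n * n.factorial) := IH
        _ = (c * ((n:ℝ)+1)) / (c ^ (n+1) * (n+1).factorial) := by
            rw [Nat.factorial_succ, pow_succ]
            push_cast
            field_simp
        _ ≤ |(n:ℝ) + 1 - α| / (c ^ (n+1) * (n+1).factorial) := by
            gcongr
            exact hkey n
        _ = 1 / (c ^ (n+1) * (n+1).factorial) * |(n:ℝ) + 1 - α| := by ring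

lemma dseq_bound (α : ℝ) (hα : α ∈ Set.Ioo (0:ℝ) 2) (hα1 : α ≠ 1) :
    ∃ A : ℝ, 0 < A ∧ ∀ n : ℕ, ‖dseq α n‖ ≤ A ^ n / (n.factorial * n.factorial) := by
  obtain ⟨c, hc, hbd⟩ := hseq_bound α hα hα1
  refine ⟨1/(9*c), by positivity, fun n => ?_⟩
  have hnorm : ‖dseq α n‖ = (1/9) ^ n * |hseq α n| / n.factorial := by
    rw [dseq, norm_div, norm_mul, norm_pow, norm_div]
    simp [Complex.norm_natCast]
  rw [hnorm]
  have hfac : (0:ℝ) < n.factorial := by positivity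
  calc (1/9:ℝ) ^ n * |hseq α n| / n.factorial
      ≤ (1/9) ^ n * (1 / (c ^ n * n.factorial)) / n.factorial := by
        gcongr
        exact hbd n
    _ = (1/(9*c)) ^ n / (n.factorial * n.factorial) := by
        rw [div_pow, div_pow, mul_pow]
        field_simp

/-- `D_α` is entire, `|D_α(x)| ≤ C e^{C√x}` on `[0,∞)`, and for
`Re t > 0` one has `∫₀^∞ e^{−x/t} D_α(x) dx = t · F_α(i t / 9)`. -/
theorem stmt4
    (α : ℝ) (hα : α ∈ Ioo (0 : ℝ) 2) (hα1 : α ≠ 1) :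
    (∀ z : ℂ, Summable (fun n : ℕ => dseq α n * z ^ n))
    ∧ (∃ C : ℝ, 0 < C ∧ ∀ x : ℝ, 0 ≤ x →
        ‖Dal α (x : ℂ)‖ ≤ C * Real.exp (C * Real.sqrt x))
    ∧ (∀ t : ℂ, 0 < t.re →
        (∫ x in Ioi (0 : ℝ), Complex.exp (-(x : ℂ) / t) * Dal α (x : ℂ))
          = t * Fal α (Complex.I * t / 9)) := by
  obtain ⟨A, hA, hbd⟩ := dseq_bound α hα hα1
  -- norm bound on terms
  have hterm : ∀ (z : ℂ) (n : ℕ), ‖dseq α n * z ^ n‖ ≤ (A * ‖z‖) ^ n / n.factorial := by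
    intro z n
    have h1 : (1:ℝ) ≤ n.factorial := by exact_mod_cast n.factorial_pos
    rw [norm_mul, norm_pow]
    calc ‖dseq α n‖ * ‖z‖ ^ n ≤ A ^ n / (n.factorial * n.factorial) * ‖z‖ ^ n := by
          gcongr; exact hbd n
      _ ≤ A ^ n / n.factorial * ‖z‖ ^ n := by
          gcongr
          exact le_mul_of_one_le_right (by positivity) h1
      _ = (A * ‖z‖) ^ n / n.factorial := by rw [mul_pow]; ring
  have hsum : ∀ z : ℂ, Summable (fun n : ℕ => dseq α n * z ^ n) := by
    intro z
    apply Summable.of_norm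
    exact Summable.of_nonneg_of_le (fun n => norm_nonneg _) (hterm z)
      (Real.summable_pow_div_factorial (A * ‖z‖))
  refine ⟨hsum, ?_, ?_⟩
  · -- growth bound
    refine ⟨max 1 (2 * Real.sqrt A), lt_of_lt_of_le one_pos (le_max_left _ _), fun x hx => ?_⟩
    set C := max 1 (2 * Real.sqrt A) with hC
    set y := Real.sqrt (A * x) with hy
    have hy0 : 0 ≤ y := Real.sqrt_nonneg _
    have hb : ∀ n : ℕ, ‖dseq α n * (x:ℂ) ^ n‖ ≤ Real.exp y * (y ^ n / n.factorial) := by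
      intro n
      have h1 : ‖dseq α n * (x:ℂ) ^ n‖ ≤ A ^ n * x ^ n / (n.factorial * n.factorial) := by
        rw [norm_mul, norm_pow, Complex.norm_real, Real.norm_eq_abs, abs_of_nonneg hx]
        calc ‖dseq α n‖ * x ^ n ≤ A ^ n / (n.factorial * n.factorial) * x ^ n := by
              gcongr; exact hbd n
          _ = A ^ n * x ^ n / (n.factorial * n.factorial) := by ring
      have h2 : A ^ n * x ^ n = y ^ n * y ^ n := by
        rw [← mul_pow, ← mul_pow, Real.mul_self_sqrt (by positivity)]
      calc ‖dseq α n * (x:ℂ) ^ n‖ ≤ A ^ n * x ^ n / (n.factorial * n.factorial) := h1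
        _ = (y ^ n / n.factorial) * (y ^ n / n.factorial) := by rw [h2]; ring
        _ ≤ Real.exp y * (y ^ n / n.factorial) :=
            mul_le_mul_of_nonneg_right (pow_div_factorial_le_exp hy0 n) (by positivity)
    have hsumnorm : Summable fun n : ℕ => ‖dseq α n * (x:ℂ) ^ n‖ :=
      Summable.of_nonneg_of_le (fun n => norm_nonneg _) (hterm _)
        (Real.summable_pow_div_factorial _)
    have hDal : ‖Dal α (x:ℂ)‖ ≤ Real.exp y * Real.exp y := by
      rw [Dal]
      calc ‖∑' n : ℕ, dseq α n * (x:ℂ) ^ n‖ ≤ ∑' n : ℕ, ‖dseq α n * (x:ℂ) ^ n‖ :=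
            norm_tsum_le_tsum_norm hsumnorm
        _ ≤ ∑' n : ℕ, Real.exp y * (y ^ n / n.factorial) :=
            Summable.tsum_le_tsum hb hsumnorm ((Real.summable_pow_div_factorial y).mul_left _)
        _ = Real.exp y * ∑' n : ℕ, y ^ n / n.factorial := tsum_mul_left
        _ = Real.exp y * Real.exp y := by rw [← exp_tsum]
    refine hDal.trans ?_
    rw [← Real.exp_add]
    have hC1 : (1:ℝ) ≤ C := le_max_left _ _
    have hyy : y + y ≤ C * Real.sqrt x := by
      have : y = Real.sqrt A * Real.sqrt x := by rw [hy, Real.sqrt_mul hA.le]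
      rw [this]
      have h2C : 2 * Real.sqrt A ≤ C := le_max_right _ _
      nlinarith [Real.sqrt_nonneg x, Real.sqrt_nonneg A]
    calc Real.exp (y + y) ≤ Real.exp (C * Real.sqrt x) := Real.exp_le_exp.mpr hyy
      _ ≤ C * Real.exp (C * Real.sqrt x) :=
          le_mul_of_one_le_left (Real.exp_pos _).le hC1
  · -- Laplace transform
    intro t ht
    have ht0 : t ≠ 0 := fun h => by simp [h] at ht
    set b : ℂ := t⁻¹ with hbdef
    have hb : 0 < b.re := by
      rw [hbdef, Complex.inv_re]
      exact div_pos ht (Complex.normSq_pos.mpr ht0)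
    have hb0 : b ≠ 0 := inv_ne_zero ht0
    set r : ℝ := b.re with hrdef
    set F : ℕ → ℝ → ℂ := fun n x => dseq α n * ((x:ℂ) ^ n * Complex.exp (-(b * x))) with hF
    have hval : ∀ x : ℝ, Complex.exp (-(x : ℂ) / t) * Dal α (x:ℂ) = ∑' n : ℕ, F n x := by
      intro x
      rw [Dal, ← tsum_mul_left]
      refine tsum_congr fun n => ?_
      rw [hF]
      rw [show -(x:ℂ)/t = -(b * x) by rw [hbdef]; ring]
      ring
    have hFint : ∀ n : ℕ, Integrable (F n) (volume.restrict (Ioi 0)) := fun n =>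
      (integrableOn_pow_mul_cexp hb n).const_mul _
    have hnormint : ∀ n : ℕ, (∫ x in Ioi (0:ℝ), ‖F n x‖)
        = ‖dseq α n‖ * (n.factorial / r ^ (n+1)) := by
      intro n
      rw [← integral_pow_mul_rexp hb n, ← MeasureTheory.integral_const_mul]
      refine setIntegral_congr_fun measurableSet_Ioi fun x hx => ?_
      rw [hF]
      rw [norm_mul, norm_mul, norm_pow, Complex.norm_real, Real.norm_eq_abs,
        abs_of_nonneg (le_of_lt hx), norm_cexp_neg_mul]
    have hFsum : Summable fun n : ℕ => ∫ x in Ioi (0:ℝ), ‖F n x‖ := by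
      refine Summable.of_nonneg_of_le
        (fun n => integral_nonneg fun x => norm_nonneg _)
        (fun n => ?_) ((Real.summable_pow_div_factorial (A/r)).mul_left (1/r))
      rw [hnormint n]
      have hfac : (0:ℝ) < n.factorial := by positivity
      calc ‖dseq α n‖ * (n.factorial / r ^ (n+1))
          ≤ A ^ n / (n.factorial * n.factorial) * (n.factorial / r ^ (n+1)) := by
            gcongr; exact hbd n
        _ = 1/r * ((A/r) ^ n / n.factorial) := by
            rw [div_pow, pow_succ]
            field_simp
    have hswap : (∫ x in Ioi (0:ℝ), Complex.exp (-(x : ℂ) / t) * Dal α (x:ℂ))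
        = ∑' n : ℕ, ∫ x in Ioi (0:ℝ), F n x := by
      rw [show (fun x : ℝ => Complex.exp (-(x : ℂ) / t) * Dal α (x:ℂ))
          = fun x : ℝ => ∑' n : ℕ, F n x from funext hval]
      exact (MeasureTheory.integral_tsum_of_summable_integral_norm hFint hFsum).symm
    rw [hswap]
    have hint : ∀ n : ℕ, (∫ x in Ioi (0:ℝ), F n x)
        = t * (((hseq α n : ℝ) : ℂ) * (Complex.I * t / 9) ^ n) := by
      intro n
      rw [hF]
      rw [MeasureTheory.integral_const_mul, integral_pow_mul_cexp hb n]
      have hfac : ((n.factorial : ℕ) : ℂ) ≠ 0 := Nat.cast_ne_zero.mpr n.factorial_ne_zero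
      rw [dseq, hbdef, inv_pow, div_eq_mul_inv ((n.factorial : ℂ)) _, inv_inv]
      have ht9 : (9:ℂ) ≠ 0 := by norm_num
      field_simp
      ring
    rw [tsum_congr hint, tsum_mul_left, Fal]
end

section
/- Let γ > 1/2, W(v) = γ((γ+1)v² − 1)/(1+v²)², M(v) = (1+v²)^{−γ/2}, and let η > 0 and λ ∈ ℂ. Suppose G : [0,∞) → ℂ is twice continuously differentiable, bounded with bounded derivative, satisfies −G''(v) + W(v) G(v) + i η v G(v) = λ η^{2/3} G(v) for all v ≥ 0, G(v) → 0 and G'(v) → 0 as v → ∞, and ∫₀^∞ (1+v) |G(v)| M(v) dv < ∞. Then G'(0) = η^{2/3} ∫₀^∞ (λ − i η^{1/3} v) G(v) M(v) dv. -/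
open MeasureTheory Set

/-- Flux identity: if `G` solves `−G'' + W G + iηv G = λη^{2/3} G` on `[0,∞)`,
is bounded with bounded derivative, tends to `0` at infinity together with its derivative, and
`∫ (1+v)|G| M < ∞`, then `G'(0) = η^{2/3} ∫₀^∞ (λ − iη^{1/3}v) G(v) M(v) dv`. -/
theorem stmt11
    (γ : ℝ) (hγ : 1 / 2 < γ)
    (W : ℝ → ℝ) (hW : ∀ v, W v = γ * ((γ + 1) * v ^ 2 - 1) / (1 + v ^ 2) ^ 2)
    (M : ℝ → ℝ) (hM : ∀ v, M v = (1 + v ^ 2) ^ (-γ / 2))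
    (η : ℝ) (hη : 0 < η) (l : ℂ)
    (G : ℝ → ℂ)
    (hreg : ContDiffOn ℝ 2 G (Ici 0))
    (hGbdd : ∃ C : ℝ, ∀ v : ℝ, 0 ≤ v → ‖G v‖ ≤ C)
    (hG'bdd : ∃ C : ℝ, ∀ v : ℝ, 0 ≤ v → ‖derivWithin G (Ici 0) v‖ ≤ C)
    (hODE : ∀ v : ℝ, 0 ≤ v →
      -(derivWithin (derivWithin G (Ici 0)) (Ici 0) v) + (W v : ℂ) * G v
          + Complex.I * (η : ℂ) * (v : ℂ) * G v
        = l * ((η ^ ((2 : ℝ) / 3) : ℝ) : ℂ) * G v)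
    (hGlim : Filter.Tendsto G Filter.atTop (nhds 0))
    (hG'lim : Filter.Tendsto (derivWithin G (Ici 0)) Filter.atTop (nhds 0))
    (hint : IntegrableOn (fun v : ℝ => (1 + v) * ‖G v‖ * M v) (Ioi 0)) :
    derivWithin G (Ici 0) 0
      = ((η ^ ((2 : ℝ) / 3) : ℝ) : ℂ)
          * ∫ v in Ioi (0 : ℝ),
              (l - Complex.I * ((η ^ ((1 : ℝ) / 3) : ℝ) : ℂ) * (v : ℂ)) * G v * (M v : ℂ) := by
  have hγ0 : (0:ℝ) < γ := lt_trans (by norm_num) hγ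
  have hp : ∀ v : ℝ, (0:ℝ) < 1 + v ^ 2 := fun v => by positivity
  set M' : ℝ → ℝ := fun v => -γ * v * (1 + v ^ 2) ^ (-γ / 2 - 1) with hM'def
  have hsq : ∀ v : ℝ, HasDerivAt (fun v : ℝ => 1 + v ^ 2) (2 * v) v := by
    intro v
    simpa using ((hasDerivAt_pow 2 v).const_add 1)
  have hMd : ∀ v : ℝ, HasDerivAt M (M' v) v := by
    intro v
    have h := (hsq v).rpow_const (p := -γ/2) (Or.inl (hp v).ne')
    have hMe : M = fun v : ℝ => (1 + v ^ 2) ^ (-γ / 2) := funext hM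
    rw [hMe]
    convert h using 1
    simp only [hM'def]
    ring
  have hMdd : ∀ v : ℝ, HasDerivAt M' (W v * M v) v := by
    intro v
    have h1 := HasDerivAt.const_mul (-γ)
      ((hasDerivAt_id' (x := v)).mul
        ((hsq v).rpow_const (p := -γ/2-1) (Or.inl (hp v).ne')))
    have hM'e : M' = fun x : ℝ => -γ * (x * (1 + x ^ 2) ^ (-γ / 2 - 1)) := by
      funext x; simp only [hM'def]; ring
    rw [hM'e]
    refine h1.congr_deriv ?_
    have hpv := hp v
    have e0 : (-γ / 2 - 1 : ℝ) - 1 = -γ/2 - 2 := by ring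
    have e2 : (1 + v ^ 2 : ℝ) ^ (-γ / 2 - 1) = (1 + v ^ 2) ^ (-γ / 2 - 2) * (1 + v ^ 2) := by
      rw [show (-γ/2-1 : ℝ) = (-γ/2-2) + 1 by ring, Real.rpow_add hpv, Real.rpow_one]
    have e1 : (1 + v ^ 2 : ℝ) ^ (-γ / 2) = (1 + v ^ 2) ^ (-γ / 2 - 2) * (1 + v ^ 2) ^ 2 := by
      have h := Real.rpow_add hpv (-γ/2-2) 2
      rw [Real.rpow_two] at h
      rw [show (-γ/2-2+2 : ℝ) = -γ/2 by ring] at h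
      exact h
    rw [hW, hM, e0, e1, e2]
    have h2 : ((1:ℝ) + v ^ 2) ^ 2 ≠ 0 := by positivity
    generalize ((1 + v ^ 2 : ℝ) ^ (-γ / 2 - 2)) = A
    field_simp
    ring
  -- basic facts about M
  have hMc : Continuous M := by
    rw [funext hM]
    exact continuous_iff_continuousAt.mpr fun v => by
      simpa [funext hM] using (hMd v).continuousAt
  have hM'c : Continuous M' := continuous_iff_continuousAt.mpr fun v => (hMdd v).continuousAt
  have hMnn : ∀ v : ℝ, 0 ≤ M v := fun v => by
    rw [hM]; exact Real.rpow_nonneg (hp v).le _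
  have hMle1 : ∀ v : ℝ, M v ≤ 1 := fun v => by
    rw [hM]
    exact Real.rpow_le_one_of_one_le_of_nonpos (by nlinarith [sq_nonneg v]) (by linarith)
  -- the first derivative of G
  set G' : ℝ → ℂ := derivWithin G (Ici 0) with hG'def
  have hG'c1 : ContDiffOn ℝ 1 G' (Ici 0) := hreg.derivWithin (uniqueDiffOn_Ici 0) (by norm_num)
  have hmem : ∀ x : ℝ, 0 < x → Ici (0:ℝ) ∈ nhds x := fun x hx => Ici_mem_nhds hx
  have hGd : ∀ x ∈ Ioi (0:ℝ), HasDerivAt G (G' x) x := by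
    intro x hx
    exact ((hreg.differentiableOn (by norm_num) x (mem_Ici.mpr (le_of_lt hx))).hasDerivWithinAt).hasDerivAt
      (hmem x hx)
  have hG'd : ∀ x ∈ Ioi (0:ℝ), HasDerivAt G' (derivWithin G' (Ici 0) x) x := by
    intro x hx
    exact ((hG'c1.differentiableOn (by norm_num) x (mem_Ici.mpr (le_of_lt hx))).hasDerivWithinAt).hasDerivAt
      (hmem x hx)
  have hODE' : ∀ x : ℝ, 0 ≤ x → derivWithin G' (Ici 0) x
      = (W x : ℂ) * G x + Complex.I * (η : ℂ) * (x : ℂ) * G x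
        - l * ((η ^ ((2 : ℝ) / 3) : ℝ) : ℂ) * G x := by
    intro x hx
    have h := hODE x hx
    rw [hG'def]
    linear_combination -h
  have hη3 : ((η ^ ((2:ℝ)/3) : ℝ) : ℂ) * ((η ^ ((1:ℝ)/3) : ℝ) : ℂ) = (η : ℂ) := by
    rw [← Complex.ofReal_mul, ← Real.rpow_add hη]
    norm_num
  set F : ℝ → ℂ := fun v => G' v * (M v : ℂ) - (M' v : ℂ) * G v with hFdef
  set f : ℝ → ℂ := fun v => -((η ^ ((2:ℝ)/3) : ℝ) : ℂ) *
    ((l - Complex.I * ((η ^ ((1:ℝ)/3) : ℝ) : ℂ) * (v:ℂ)) * G v * (M v : ℂ)) with hfdef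
  -- the derivative of the flux F is f on (0, ∞)
  have hFd : ∀ x ∈ Ioi (0:ℝ), HasDerivAt F (f x) x := by
    intro x hx
    have h1 : HasDerivAt (fun v => G' v * (M v : ℂ))
        (derivWithin G' (Ici 0) x * (M x : ℂ) + G' x * ((M' x : ℝ) : ℂ)) x :=
      (hG'd x hx).mul ((hMd x).ofReal_comp)
    have h2 : HasDerivAt (fun v => ((M' v : ℝ) : ℂ) * G v)
        (((W x * M x : ℝ) : ℂ) * G x + ((M' x : ℝ) : ℂ) * G' x) x :=
      ((hMdd x).ofReal_comp).mul (hGd x hx)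
    have h3 := h1.sub h2
    have hval : derivWithin G' (Ici 0) x * (M x : ℂ) + G' x * ((M' x : ℝ) : ℂ)
        - (((W x * M x : ℝ) : ℂ) * G x + ((M' x : ℝ) : ℂ) * G' x) = f x := by
      rw [hODE' x (le_of_lt hx)]
      simp only [hfdef]
      push_cast
      linear_combination (-(Complex.I * (x:ℂ) * G x * ((M x : ℝ) : ℂ))) * hη3
    rw [hval] at h3
    exact h3
  -- continuity of F at 0 within [0, ∞)
  have hFcontOn : ContinuousOn F (Ici 0) := by
    apply ContinuousOn.sub
    · exact hG'c1.continuousOn.mul (Complex.continuous_ofReal.comp hMc).continuousOn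
    · exact (Complex.continuous_ofReal.comp hM'c).continuousOn.mul hreg.continuousOn
  have hFcont : ContinuousWithinAt F (Ici 0) 0 := hFcontOn 0 self_mem_Ici
  -- F tends to 0 at infinity
  have tend1 : Filter.Tendsto (fun v => G' v * (M v : ℂ)) Filter.atTop (nhds 0) := by
    apply squeeze_zero_norm' (a := fun v => ‖G' v‖)
    · filter_upwards [Filter.eventually_ge_atTop (0:ℝ)] with v hv
      calc ‖G' v * (M v : ℂ)‖ = ‖G' v‖ * ‖(M v : ℂ)‖ := norm_mul _ _
        _ ≤ ‖G' v‖ * 1 := by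
            apply mul_le_mul_of_nonneg_left _ (norm_nonneg _)
            rw [Complex.norm_real, Real.norm_of_nonneg (hMnn v)]
            exact hMle1 v
        _ = ‖G' v‖ := mul_one _
    · simpa using hG'lim.norm
  obtain ⟨C, hC⟩ := hGbdd
  have hC0 : (0:ℝ) ≤ C := le_trans (norm_nonneg _) (hC 0 le_rfl)
  have tend2 : Filter.Tendsto (fun v => ((M' v : ℝ) : ℂ) * G v) Filter.atTop (nhds 0) := by
    apply squeeze_zero_norm' (a := fun v => γ * C / v)
    · filter_upwards [Filter.eventually_ge_atTop (1:ℝ)] with v hv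
      have hv0 : (0:ℝ) < v := lt_of_lt_of_le one_pos hv
      have hb1 : (1:ℝ) ≤ 1 + v ^ 2 := by nlinarith
      have hstep : (1 + v ^ 2 : ℝ) ^ (-γ / 2 - 1) ≤ (1 + v ^ 2) ^ (-1 : ℝ) :=
        Real.rpow_le_rpow_of_exponent_le hb1 (by linarith)
      have hM'bd : |M' v| ≤ γ / v := by
        have hM'nn : 0 ≤ (1 + v ^ 2 : ℝ) ^ (-γ / 2 - 1) := Real.rpow_nonneg (hp v).le _
        have : |M' v| = γ * v * (1 + v ^ 2) ^ (-γ / 2 - 1) := by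
          simp only [hM'def]
          rw [abs_of_nonpos (by nlinarith [mul_nonneg (mul_nonneg hγ0.le hv0.le) hM'nn])]
          ring
        rw [this]
        calc γ * v * (1 + v ^ 2) ^ (-γ / 2 - 1) ≤ γ * v * (1 + v ^ 2) ^ (-1 : ℝ) := by
              apply mul_le_mul_of_nonneg_left hstep (by nlinarith)
          _ = γ * v / (1 + v ^ 2) := by rw [Real.rpow_neg_one]; ring
          _ ≤ γ / v := by
              rw [div_le_div_iff₀ (hp v) hv0]
              nlinarith
      calc ‖((M' v : ℝ) : ℂ) * G v‖ = |M' v| * ‖G v‖ := by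
            rw [norm_mul, Complex.norm_real, Real.norm_eq_abs]
        _ ≤ (γ / v) * C := mul_le_mul hM'bd (hC v hv0.le) (norm_nonneg _)
            (by positivity)
        _ = γ * C / v := by ring
    · exact Filter.Tendsto.div_atTop tendsto_const_nhds Filter.tendsto_id
  have hFtend : Filter.Tendsto F Filter.atTop (nhds 0) := by
    simpa [hFdef] using tend1.sub tend2
  -- integrability of f
  have hr0 : (0:ℝ) ≤ η ^ ((1:ℝ)/3) := Real.rpow_nonneg hη.le _
  have hc0 : (0:ℝ) ≤ η ^ ((2:ℝ)/3) := Real.rpow_nonneg hη.le _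
  have hfint : IntegrableOn f (Ioi (0:ℝ)) := by
    have hfc : ContinuousOn f (Ioi 0) := by
      apply ContinuousOn.mul (continuousOn_const)
      apply ContinuousOn.mul
      · exact (continuousOn_const.sub
          ((continuous_const.mul Complex.continuous_ofReal).continuousOn)).mul
          (hreg.continuousOn.mono Ioi_subset_Ici_self)
      · exact (Complex.continuous_ofReal.comp hMc).continuousOn
    refine Integrable.mono'
      (hint.const_mul (η ^ ((2:ℝ)/3) * (‖l‖ + η ^ ((1:ℝ)/3))))
      (hfc.aestronglyMeasurable measurableSet_Ioi) ?_
    filter_upwards [ae_restrict_mem measurableSet_Ioi] with v hv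
    have hv0 : (0:ℝ) < v := hv
    have hnI : ‖Complex.I * ((η ^ ((1:ℝ)/3) : ℝ) : ℂ) * (v:ℂ)‖ = η ^ ((1:ℝ)/3) * v := by
      rw [norm_mul, norm_mul, Complex.norm_I, Complex.norm_real, Complex.norm_real,
        Real.norm_of_nonneg hr0, Real.norm_of_nonneg hv0.le, one_mul]
    have h2 : ‖l - Complex.I * ((η ^ ((1:ℝ)/3) : ℝ) : ℂ) * (v:ℂ)‖ ≤ ‖l‖ + η ^ ((1:ℝ)/3) * v := by
      refine (norm_sub_le _ _).trans ?_
      rw [hnI]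
    have h1 : ‖f v‖ = η ^ ((2:ℝ)/3) *
        (‖l - Complex.I * ((η ^ ((1:ℝ)/3) : ℝ) : ℂ) * (v:ℂ)‖ * ‖G v‖ * M v) := by
      simp only [hfdef]
      rw [norm_mul, norm_neg, norm_mul, norm_mul, Complex.norm_real, Complex.norm_real,
        Real.norm_of_nonneg hc0, Real.norm_of_nonneg (hMnn v)]
    rw [h1]
    have key : ‖l‖ + η ^ ((1:ℝ)/3) * v ≤ (‖l‖ + η ^ ((1:ℝ)/3)) * (1 + v) := by
      nlinarith [norm_nonneg l]
    have gm : (0:ℝ) ≤ ‖G v‖ * M v := mul_nonneg (norm_nonneg _) (hMnn v)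
    nlinarith [mul_le_mul_of_nonneg_left
      (mul_le_mul_of_nonneg_right (h2.trans key) gm) hc0]
  -- fundamental theorem of calculus on [0, ∞)
  have key := integral_Ioi_of_hasDerivAt_of_tendsto hFcont hFd hfint hFtend
  have hF0 : F 0 = G' 0 := by
    simp only [hFdef, hM'def]
    rw [hM 0]
    norm_num [Real.one_rpow]
  rw [hF0] at key
  have hsplit : ∫ v in Ioi (0:ℝ), f v
      = -((η ^ ((2:ℝ)/3) : ℝ) : ℂ) * ∫ v in Ioi (0:ℝ),
          (l - Complex.I * ((η ^ ((1:ℝ)/3) : ℝ) : ℂ) * (v:ℂ)) * G v * (M v : ℂ) := by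
    simp only [hfdef]
    exact integral_const_mul _ _
  rw [hsplit] at key
  linear_combination key
end

section
/- Let β > 1 and let F(v) = C_β² (1+v²)^{−β/2} with C_β² ∫_ℝ (1+v²)^{−β/2} dv = 1, so that F is a probability density on ℝ. Then there exists a constant C > 0 such that for every bounded continuously differentiable function h : ℝ → ℝ with ∫_ℝ h(v) F(v) dv = 0, one has ∫_ℝ h(v)² F(v) dv ≤ C · ( ∫_ℝ h'(v)² F(v) dv )^{(β−1)/(β+1)} · ( sup_{v∈ℝ} |h(v)| )^{4/(β+1)}. -/
open MeasureTheory Set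
open scoped ENNReal NNReal


theorem stmt17_cs (F φ : ℝ → ℝ) (Fcont : Continuous F) (Fpos : ∀ v, 0 < F v)
    (φcont : Continuous φ) (Dint : Integrable (fun v => φ v ^ 2 * F v))
    (hD : 0 < ∫ v, φ v ^ 2 * F v)
    (a b : ℝ) (hab : a ≤ b) (M : ℝ) (hM : ∀ v ∈ Ioc a b, (F v)⁻¹ ≤ M) :
    (∫ v in Ioc a b, |φ v|) ^ 2 ≤ (∫ v, φ v ^ 2 * F v) * ((b - a) * M) := by
  set D := ∫ v, φ v ^ 2 * F v with hDdef
  rcases eq_or_lt_of_le hab with rfl | hab'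
  · simp
  have hM0 : 0 < M := lt_of_lt_of_le (inv_pos.mpr (Fpos b)) (hM b ⟨hab', le_refl b⟩)
  set G := (b - a) * M with hGdef
  have hG0 : 0 < G := mul_pos (by linarith) hM0
  have hFinv : Continuous (fun v => (F v)⁻¹) := by
    fun_prop (disch := intro v; exact (Fpos v).ne')
  have key : ∀ t : ℝ, 0 < t →
      (∫ v in Ioc a b, |φ v|) ≤ (t * D + t⁻¹ * G) / 2 := by
    intro t ht
    have hint1 : IntegrableOn (fun v => |φ v|) (Ioc a b) := φcont.abs.integrableOn_Ioc
    have hintA : IntegrableOn (fun v => t * (φ v ^ 2 * F v)) (Ioc a b) :=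
      Dint.integrableOn.const_mul t
    have hintB : IntegrableOn (fun v => t⁻¹ * (F v)⁻¹) (Ioc a b) :=
      (hFinv.integrableOn_Ioc).const_mul _
    have step1 : (∫ v in Ioc a b, |φ v|)
        ≤ ∫ v in Ioc a b, (t * (φ v ^ 2 * F v) + t⁻¹ * (F v)⁻¹) / 2 := by
      apply setIntegral_mono_on hint1 ((hintA.add hintB).div_const 2) measurableSet_Ioc
      intro v _
      have h1 : 0 < F v := Fpos v
      simp only [Pi.add_apply]
      rw [le_div_iff₀ (by norm_num : (0:ℝ) < 2), ← sub_nonneg, ← sq_abs (φ v)]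
      have hid : t * (|φ v| ^ 2 * F v) + t⁻¹ * (F v)⁻¹ - |φ v| * 2
          = (t * |φ v| * F v - 1) ^ 2 * (t⁻¹ * (F v)⁻¹) := by
        field_simp
        ring
      rw [hid]
      positivity
    have step2 : ∫ v in Ioc a b, (t * (φ v ^ 2 * F v) + t⁻¹ * (F v)⁻¹) / 2
        = (t * (∫ v in Ioc a b, φ v ^ 2 * F v) + t⁻¹ * ∫ v in Ioc a b, (F v)⁻¹) / 2 := by
      rw [integral_div, integral_add hintA hintB, integral_const_mul, integral_const_mul]
    have step3 : ∫ v in Ioc a b, φ v ^ 2 * F v ≤ D := by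
      apply setIntegral_le_integral Dint
      filter_upwards with v
      exact mul_nonneg (sq_nonneg _) (Fpos v).le
    have step4 : ∫ v in Ioc a b, (F v)⁻¹ ≤ G := by
      have h5 : ∫ v in Ioc a b, (F v)⁻¹ ≤ ∫ _ in Ioc a b, M :=
        setIntegral_mono_on hFinv.integrableOn_Ioc
          (integrableOn_const (by simp)) measurableSet_Ioc hM
      rw [setIntegral_const, Real.volume_real_Ioc_of_le hab, smul_eq_mul] at h5
      exact h5
    calc (∫ v in Ioc a b, |φ v|) ≤ _ := step1
      _ = _ := step2
      _ ≤ (t * D + t⁻¹ * G) / 2 := by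
          gcongr
  -- optimize over t
  have hA : (∫ v in Ioc a b, |φ v|) ≤ Real.sqrt D * Real.sqrt G := by
    have ht : 0 < Real.sqrt G / Real.sqrt D := by positivity
    have hk := key _ ht
    have e1 : Real.sqrt G / Real.sqrt D * D = Real.sqrt D * Real.sqrt G := by
      rw [div_mul_eq_mul_div, mul_comm,
        show D * Real.sqrt G / Real.sqrt D = Real.sqrt G * (D / Real.sqrt D) by ring,
        Real.div_sqrt, mul_comm]
    have e2 : (Real.sqrt G / Real.sqrt D)⁻¹ * G = Real.sqrt D * Real.sqrt G := by
      rw [inv_div, div_mul_eq_mul_div,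
        show Real.sqrt D * G / Real.sqrt G = Real.sqrt D * (G / Real.sqrt G) by ring,
        Real.div_sqrt]
    rw [e1, e2] at hk
    linarith
  have hAnn : 0 ≤ ∫ v in Ioc a b, |φ v| := by positivity
  calc (∫ v in Ioc a b, |φ v|) ^ 2 ≤ (Real.sqrt D * Real.sqrt G) ^ 2 :=
        pow_le_pow_left₀ hAnn hA 2
    _ = D * G := by rw [mul_pow, Real.sq_sqrt hD.le, Real.sq_sqrt hG0.le]


theorem stmt17_ptwise (β : ℝ) (hβ : 1 < β) (Cβ : ℝ) (hCβ : 0 < Cβ)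
    (F : ℝ → ℝ) (hF : ∀ v, F v = Cβ ^ 2 * (1 + v ^ 2) ^ (-β / 2))
    (Fcont : Continuous F) (Fpos : ∀ v, 0 < F v)
    (h : ℝ → ℝ) (hC1 : ContDiff ℝ 1 h)
    (Dint : Integrable (fun v => deriv h v ^ 2 * F v))
    (hD : 0 < ∫ v, deriv h v ^ 2 * F v) :
    ∀ x : ℝ, (h x - h 0) ^ 2 * F x ≤ (∫ v, deriv h v ^ 2 * F v) * |x| := by
  have cs := stmt17_cs F (deriv h) Fcont Fpos (hC1.continuous_deriv le_rfl) Dint hD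
  set D := ∫ v, deriv h v ^ 2 * F v with hDdef
  have hFinv : ∀ v : ℝ, (F v)⁻¹ = (Cβ ^ 2)⁻¹ * (1 + v ^ 2) ^ (β / 2) := by
    intro v
    have h1v : (0:ℝ) < 1 + v ^ 2 := by positivity
    rw [hF, mul_inv, ← Real.rpow_neg h1v.le, neg_div, neg_neg]
  have hMF : ∀ x : ℝ, (Cβ ^ 2)⁻¹ * (1 + x ^ 2) ^ (β / 2) * F x = 1 := by
    intro x
    have h1v : (0:ℝ) < 1 + x ^ 2 := by positivity
    have e : (1 + x ^ 2) ^ (β / 2) * (1 + x ^ 2) ^ (-β / 2) = 1 := by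
      rw [← Real.rpow_add h1v, show β / 2 + -β / 2 = 0 by ring, Real.rpow_zero]
    rw [hF, mul_mul_mul_comm, e, inv_mul_cancel₀ (by positivity), mul_one]
  have hMbound : ∀ x : ℝ, ∀ v : ℝ, v ^ 2 ≤ x ^ 2 →
      (F v)⁻¹ ≤ (Cβ ^ 2)⁻¹ * (1 + x ^ 2) ^ (β / 2) := by
    intro x v hv
    rw [hFinv v]
    apply mul_le_mul_of_nonneg_left _ (by positivity)
    exact Real.rpow_le_rpow (by positivity) (by linarith) (by linarith)
  have hdiff : ∀ x : ℝ, ∀ y ∈ uIcc 0 x, DifferentiableAt ℝ h y :=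
    fun x y _ => (hC1.differentiable one_ne_zero).differentiableAt
  have hii : ∀ x : ℝ, IntervalIntegrable (deriv h) volume 0 x :=
    fun x => (hC1.continuous_deriv le_rfl).intervalIntegrable 0 x
  intro x
  have hftc : h x - h 0 = ∫ y in (0:ℝ)..x, deriv h y :=
    (intervalIntegral.integral_deriv_eq_sub (hdiff x) (hii x)).symm
  set M := (Cβ ^ 2)⁻¹ * (1 + x ^ 2) ^ (β / 2) with hMdef
  have key : (h x - h 0) ^ 2 ≤ D * (|x| * M) := by
    rcases le_total 0 x with hx | hx
    · have habs : |h x - h 0| ≤ ∫ y in Ioc 0 x, |deriv h y| := by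
        rw [hftc, ← intervalIntegral.integral_of_le hx]
        exact (intervalIntegral.abs_integral_le_integral_abs hx).trans (le_refl _)
      have hcs := cs 0 x hx M (fun v hv => hMbound x v (by
        rcases hv with ⟨h1, h2⟩; nlinarith))
      calc (h x - h 0) ^ 2 = |h x - h 0| ^ 2 := (sq_abs _).symm
        _ ≤ (∫ y in Ioc 0 x, |deriv h y|) ^ 2 := by
            apply pow_le_pow_left₀ (abs_nonneg _) habs
        _ ≤ D * ((x - 0) * M) := hcs
        _ = D * (|x| * M) := by rw [abs_of_nonneg hx]; ring_nf
    · have habs : |h x - h 0| ≤ ∫ y in Ioc x 0, |deriv h y| := by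
        have : h x - h 0 = -∫ y in (x:ℝ)..(0:ℝ), deriv h y := by
          rw [hftc, intervalIntegral.integral_symm]
        rw [this, abs_neg, ← intervalIntegral.integral_of_le hx]
        exact intervalIntegral.abs_integral_le_integral_abs hx
      have hcs := cs x 0 hx M (fun v hv => hMbound x v (by
        rcases hv with ⟨h1, h2⟩; nlinarith))
      calc (h x - h 0) ^ 2 = |h x - h 0| ^ 2 := (sq_abs _).symm
        _ ≤ (∫ y in Ioc x 0, |deriv h y|) ^ 2 := by
            apply pow_le_pow_left₀ (abs_nonneg _) habs
        _ ≤ D * ((0 - x) * M) := hcs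
        _ = D * (|x| * M) := by rw [abs_of_nonpos hx]; ring_nf
  calc (h x - h 0) ^ 2 * F x ≤ D * (|x| * M) * F x := by
        apply mul_le_mul_of_nonneg_right key (Fpos x).le
    _ = D * |x| * (M * F x) := by ring
    _ = D * |x| := by rw [hMF x]; ring


set_option maxHeartbeats 1000000 in
theorem stmt17_core (β : ℝ) (hβ : 1 < β) (Cβ : ℝ) (hCβ : 0 < Cβ)
    (F : ℝ → ℝ) (hF : ∀ v, F v = Cβ ^ 2 * (1 + v ^ 2) ^ (-β / 2))
    (Fcont : Continuous F) (Fpos : ∀ v, 0 < F v) (Fint : Integrable F)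
    (hprob : ∫ v : ℝ, F v = 1)
    (tail : ∀ R : ℝ, 0 < R →
      ∫ v in (Icc (-R) R)ᶜ, F v ≤ 2 * Cβ ^ 2 / (β - 1) * R ^ (1 - β))
    (h : ℝ → ℝ) (hC1 : ContDiff ℝ 1 h)
    (S : ℝ) (hSnn : 0 ≤ S) (hS : ∀ v, |h v| ≤ S)
    (Dint : Integrable (fun v => deriv h v ^ 2 * F v))
    (hmean : (∫ v : ℝ, h v * F v) = 0) :
    ∫ v, h v ^ 2 * F v ≤ (2 + 6 * Cβ ^ 2 / (β - 1)) *
      (∫ v, deriv h v ^ 2 * F v) ^ ((β - 1) / (β + 1)) * S ^ (4 / (β + 1)) := by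
  set K : ℝ := 2 * Cβ ^ 2 / (β - 1) with hK
  have hK0 : 0 < K := by
    apply div_pos (by positivity) (by linarith)
  set D := ∫ v, deriv h v ^ 2 * F v with hDdef
  have hcont : Continuous h := hC1.continuous
  have hDnn : 0 ≤ D := integral_nonneg (fun v => mul_nonneg (sq_nonneg _) (Fpos v).le)
  have int_h2F : Integrable (fun v => h v ^ 2 * F v) := by
    apply Fint.bdd_mul (c := S ^ 2) ((hcont.pow 2).aestronglyMeasurable)
    exact Filter.Eventually.of_forall fun v => by
      rw [Real.norm_eq_abs, Pi.pow_apply, abs_pow, sq_abs, ← sq_abs (h v)]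
      exact pow_le_pow_left₀ (abs_nonneg _) (hS v) 2
  have int_hF : Integrable (fun v => h v * F v) :=
    Fint.bdd_mul (c := S) hcont.aestronglyMeasurable (Filter.Eventually.of_forall fun v => by rw [Real.norm_eq_abs]; exact hS v)
  have Lnn : 0 ≤ ∫ v, h v ^ 2 * F v :=
    integral_nonneg (fun v => mul_nonneg (sq_nonneg _) (Fpos v).le)
  have RHSnn : ∀ d : ℝ, 0 ≤ d → 0 ≤ (2 + 3 * K) * d ^ ((β - 1) / (β + 1)) * S ^ (4 / (β + 1)) := by
    intro d hd
    have := Real.rpow_nonneg hd ((β - 1) / (β + 1))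
    have := Real.rpow_nonneg hSnn (4 / (β + 1))
    positivity
  have hgoalC : (2:ℝ) + 6 * Cβ ^ 2 / (β - 1) = 2 + 3 * K := by rw [hK]; ring
  rw [hgoalC]
  -- Case D = 0 : h is constant, hence 0
  rcases eq_or_lt_of_le hDnn with hD0 | hDpos
  · have hzero : ∀ v, h v = 0 := by
      have hae : (fun v => deriv h v ^ 2 * F v) =ᵐ[volume] 0 := by
        rw [← integral_eq_zero_iff_of_nonneg
          (fun v => mul_nonneg (sq_nonneg _) (Fpos v).le) Dint]
        exact hD0.symm
      have heq : (fun v => deriv h v ^ 2 * F v) = 0 :=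
        (Continuous.ae_eq_iff_eq volume
          (((hC1.continuous_deriv le_rfl).pow 2).mul Fcont) continuous_const).mp hae
      have hderiv0 : ∀ v, deriv h v = 0 := by
        intro v
        have := congrFun heq v
        simp only [Pi.zero_apply] at this
        have hFv := (Fpos v).ne'
        have : deriv h v ^ 2 = 0 := by
          by_contra hc
          exact hc (by nlinarith [sq_nonneg (deriv h v), Fpos v])
        exact pow_eq_zero_iff (by norm_num) |>.mp this
      have hconst : ∀ v, h v = h 0 :=
        fun v => is_const_of_deriv_eq_zero (hC1.differentiable one_ne_zero) hderiv0 v 0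
      have h00 : h 0 = 0 := by
        have : ∫ v, h v * F v = ∫ v, h 0 * F v := by
          congr 1; ext v; rw [hconst v]
        rw [this, integral_const_mul, hprob, mul_one] at hmean
        exact hmean
      intro v; rw [hconst v, h00]
    have : ∫ v, h v ^ 2 * F v = 0 := by
      have : (fun v => h v ^ 2 * F v) = fun _ => (0:ℝ) := by
        ext v; rw [hzero v]; ring
      rw [this, integral_zero]
    rw [this]
    exact RHSnn D hDnn
  -- Case S = 0 : h ≡ 0
  rcases eq_or_lt_of_le hSnn with hS0 | hSpos
  · exfalso
    have hzero : ∀ v, h v = 0 := by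
      intro v
      have h1 := hS v
      rw [← hS0] at h1
      exact abs_eq_zero.mp (le_antisymm h1 (abs_nonneg _))
    have : h = fun _ => 0 := funext hzero
    rw [this] at hDdef
    simp only [deriv_const'] at hDdef
    norm_num at hDdef
    rw [hDdef] at hDpos
    exact lt_irrefl 0 hDpos
  -- Main case
  have ptw := stmt17_ptwise β hβ Cβ hCβ F hF Fcont Fpos h hC1 Dint hDpos
  rw [← hDdef] at ptw
  have int_sq : Integrable (fun v => (h v - h 0) ^ 2 * F v) := by
    apply Fint.bdd_mul (c := (2 * S) ^ 2) (((hcont.sub continuous_const).pow 2).aestronglyMeasurable)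
    refine Filter.Eventually.of_forall fun v => ?_
    rw [Real.norm_eq_abs, Pi.pow_apply, Pi.sub_apply, abs_pow, sq_abs, ← sq_abs (h v - h 0)]
    have : |h v - h 0| ≤ 2 * S := by
      calc |h v - h 0| ≤ |h v| + |h 0| := abs_sub _ _
        _ ≤ 2 * S := by have := hS v; have := hS 0; linarith
    exact pow_le_pow_left₀ (abs_nonneg _) this 2
  have int_absF : Integrable (fun v => |h v| * F v) :=
    Fint.bdd_mul (c := S) hcont.abs.aestronglyMeasurable
      (Filter.Eventually.of_forall fun v => by rw [Real.norm_eq_abs, abs_abs]; exact hS v)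
  have key : ∀ R : ℝ, 0 < R →
      ∫ v, h v ^ 2 * F v ≤ 2 * D * R ^ 2 + 3 * K * (S ^ 2 * R ^ (1 - β)) := by
    intro R hR
    set A : Set ℝ := Icc (-R) R with hA
    have hAm : MeasurableSet A := measurableSet_Icc
    set T := ∫ v in Aᶜ, F v with hT
    have hTnn : 0 ≤ T := setIntegral_nonneg hAm.compl (fun v _ => (Fpos v).le)
    have hTle : T ≤ K * R ^ (1 - β) := tail R hR
    have hsplit : ∫ v, h v ^ 2 * F v
        = (∫ v in A, h v ^ 2 * F v) + ∫ v in Aᶜ, h v ^ 2 * F v :=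
      (integral_add_compl hAm int_h2F).symm
    have tail2 : ∫ v in Aᶜ, h v ^ 2 * F v ≤ S ^ 2 * T := by
      have : ∫ v in Aᶜ, h v ^ 2 * F v ≤ ∫ v in Aᶜ, S ^ 2 * F v := by
        apply setIntegral_mono_on int_h2F.integrableOn
          ((Fint.const_mul (S ^ 2)).integrableOn) hAm.compl
        intro v _
        apply mul_le_mul_of_nonneg_right _ (Fpos v).le
        rw [← sq_abs (h v)]
        exact pow_le_pow_left₀ (abs_nonneg _) (hS v) 2
      rwa [integral_const_mul] at this
    have hmean' : ∫ v in A, h v * F v = -∫ v in Aᶜ, h v * F v := by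
      have := integral_add_compl hAm int_hF
      rw [hmean] at this
      linarith
    have habs : |∫ v in Aᶜ, h v * F v| ≤ S * T := by
      calc |∫ v in Aᶜ, h v * F v| ≤ ∫ v in Aᶜ, |h v * F v| := by
            rw [← Real.norm_eq_abs]
            exact (norm_integral_le_integral_norm _).trans (le_of_eq (by
              congr 1))
        _ = ∫ v in Aᶜ, |h v| * F v := by
            congr 1
            ext v
            rw [abs_mul, abs_of_nonneg (Fpos v).le]
        _ ≤ ∫ v in Aᶜ, S * F v := by
            apply setIntegral_mono_on int_absF.integrableOn
              ((Fint.const_mul S).integrableOn) hAm.compl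
            intro v _
            exact mul_le_mul_of_nonneg_right (hS v) (Fpos v).le
        _ = S * T := by rw [integral_const_mul]
    have inner1 : ∫ v in A, h v ^ 2 * F v
        = (∫ v in A, (h v - h 0) ^ 2 * F v) + 2 * h 0 * (∫ v in A, h v * F v)
          - h 0 ^ 2 * ∫ v in A, F v := by
      have hw : ∫ v in A, h v ^ 2 * F v
          = ∫ v in A, (((h v - h 0) ^ 2 * F v + 2 * h 0 * (h v * F v))
            - h 0 ^ 2 * F v) := by
        congr 1
        ext v
        ring
      have intAB : Integrable
          (fun v => (h v - h 0) ^ 2 * F v + 2 * h 0 * (h v * F v))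
          (volume.restrict A) :=
        (int_sq.integrableOn).add ((int_hF.const_mul (2 * h 0)).integrableOn)
      have intC : Integrable (fun v => h 0 ^ 2 * F v) (volume.restrict A) :=
        (Fint.const_mul (h 0 ^ 2)).integrableOn
      rw [hw, integral_sub intAB intC,
        integral_add int_sq.integrableOn ((int_hF.const_mul (2 * h 0)).integrableOn),
        integral_const_mul, integral_const_mul]
    have bound_mid : 2 * h 0 * (∫ v in A, h v * F v) ≤ 2 * S * (S * T) := by
      calc 2 * h 0 * (∫ v in A, h v * F v)
          ≤ |2 * h 0 * (∫ v in A, h v * F v)| := le_abs_self _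
        _ = 2 * |h 0| * |∫ v in Aᶜ, h v * F v| := by
            rw [hmean', abs_mul, abs_mul, abs_neg]
            norm_num
        _ ≤ 2 * S * (S * T) := by
            have h1 := hS 0
            have h2 := abs_nonneg (h 0)
            have h4 := abs_nonneg (∫ v in Aᶜ, h v * F v)
            nlinarith
    have bound_sq : ∫ v in A, (h v - h 0) ^ 2 * F v ≤ 2 * D * R ^ 2 := by
      calc ∫ v in A, (h v - h 0) ^ 2 * F v ≤ ∫ _ in A, D * R := by
            apply setIntegral_mono_on int_sq.integrableOn
              (integrableOn_const (by rw [hA, Real.volume_Icc]; exact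
                ENNReal.ofReal_ne_top)) hAm
            intro x hx
            refine (ptw x).trans ?_
            apply mul_le_mul_of_nonneg_left _ hDnn
            rw [abs_le]
            exact ⟨hx.1, hx.2⟩
        _ = 2 * D * R ^ 2 := by
            rw [setIntegral_const, hA, Real.volume_real_Icc_of_le (by linarith), smul_eq_mul]
            ring
    have bound_neg : 0 ≤ h 0 ^ 2 * ∫ v in A, F v :=
      mul_nonneg (sq_nonneg _) (setIntegral_nonneg hAm (fun v _ => (Fpos v).le))
    have hST : S ^ 2 * T ≤ S ^ 2 * (K * R ^ (1 - β)) :=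
      mul_le_mul_of_nonneg_left hTle (sq_nonneg S)
    rw [hsplit, inner1]
    nlinarith [hST, tail2, bound_mid, bound_sq, bound_neg]
  -- Optimization
  set R := (S ^ 2 / D) ^ ((β + 1)⁻¹) with hRdef
  have hu : 0 < S ^ 2 / D := div_pos (pow_pos hSpos 2) hDpos
  have hR0 : 0 < R := Real.rpow_pos_of_pos hu _
  have hb1 : β + 1 ≠ 0 := by linarith
  have hbound := key R hR0
  have hlogR : Real.log R = (β + 1)⁻¹ * (2 * Real.log S - Real.log D) := by
    rw [hRdef, Real.log_rpow hu, Real.log_div (by positivity) hDpos.ne',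
      Real.log_pow]
    norm_num
  have hDt : 0 < D ^ ((β - 1) / (β + 1)) := Real.rpow_pos_of_pos hDpos _
  have hSq : 0 < S ^ (4 / (β + 1)) := Real.rpow_pos_of_pos hSpos _
  have eqA : D * R ^ 2 = D ^ ((β - 1) / (β + 1)) * S ^ (4 / (β + 1)) := by
    rw [← Real.exp_log (by positivity : (0:ℝ) < D * R ^ 2),
      ← Real.exp_log (mul_pos hDt hSq)]
    congr 1
    rw [Real.log_mul hDpos.ne' (by positivity), Real.log_pow, hlogR,
      Real.log_mul hDt.ne' hSq.ne', Real.log_rpow hDpos, Real.log_rpow hSpos]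
    field_simp
    ring
  have eqB : S ^ 2 * R ^ (1 - β) = D ^ ((β - 1) / (β + 1)) * S ^ (4 / (β + 1)) := by
    rw [← Real.exp_log (mul_pos (pow_pos hSpos 2) (Real.rpow_pos_of_pos hR0 _)),
      ← Real.exp_log (mul_pos hDt hSq)]
    congr 1
    rw [Real.log_mul (by positivity) (Real.rpow_pos_of_pos hR0 _).ne',
      Real.log_pow, Real.log_rpow hR0, hlogR,
      Real.log_mul hDt.ne' hSq.ne', Real.log_rpow hDpos, Real.log_rpow hSpos]
    field_simp
    ring
  calc ∫ v, h v ^ 2 * F v ≤ 2 * D * R ^ 2 + 3 * K * (S ^ 2 * R ^ (1 - β)) := hbound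
    _ = 2 * (D * R ^ 2) + 3 * K * (S ^ 2 * R ^ (1 - β)) := by ring
    _ = (2 + 3 * K) * D ^ ((β - 1) / (β + 1)) * S ^ (4 / (β + 1)) := by
        rw [eqA, eqB]
        ring

/-- Nash-type inequality for the heavy-tailed probability density
`F(v) = C_β² (1+v²)^{−β/2}`: there is `C > 0` such that for every bounded `C¹` function `h`
with `∫ h F = 0`,
`∫ h² F ≤ C (∫ h'² F)^{(β−1)/(β+1)} (sup |h|)^{4/(β+1)}`
(stated with lower integrals so that both sides make sense even if `∫ h'² F = ∞`). -/
theorem stmt17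
    (β : ℝ) (hβ : 1 < β)
    (Cβ : ℝ) (hCβ : 0 < Cβ)
    (F : ℝ → ℝ) (hF : ∀ v, F v = Cβ ^ 2 * (1 + v ^ 2) ^ (-β / 2))
    (hprob : ∫ v : ℝ, F v = 1) :
    ∃ C : ℝ, 0 < C ∧
      ∀ h : ℝ → ℝ, ContDiff ℝ 1 h → (∃ B : ℝ, ∀ v : ℝ, |h v| ≤ B) →
        (∫ v : ℝ, h v * F v) = 0 →
        (∫⁻ v : ℝ, ENNReal.ofReal (h v ^ 2 * F v))
          ≤ ENNReal.ofReal C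
            * (∫⁻ v : ℝ, ENNReal.ofReal (deriv h v ^ 2 * F v)) ^ ((β - 1) / (β + 1))
            * (⨆ v : ℝ, ENNReal.ofReal |h v|) ^ (4 / (β + 1)) := by
  -- basic facts about F
  have h1v : ∀ v : ℝ, (0:ℝ) < 1 + v ^ 2 := fun v => by positivity
  have Fpos : ∀ v, 0 < F v := fun v => by rw [hF]; positivity
  have Fcont : Continuous F := by
    rw [funext hF]
    exact continuous_const.mul ((continuous_const.add (continuous_pow 2)).rpow_const
      (fun v => Or.inl (h1v v).ne'))
  have Fint : Integrable F := by
    by_contra hc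
    rw [integral_undef hc] at hprob
    norm_num at hprob
  -- tail bound (one-sided)
  have tail1 : ∀ R : ℝ, 0 < R → ∫ v in Ioi R, F v ≤ Cβ ^ 2 / (β - 1) * R ^ (1 - β) := by
    intro R hR
    have hint : IntegrableOn (fun x : ℝ => Cβ ^ 2 * x ^ (-β)) (Ioi R) :=
      (integrableOn_Ioi_rpow_of_lt (by linarith) hR).const_mul _
    have hmono : ∀ x ∈ Ioi R, F x ≤ Cβ ^ 2 * x ^ (-β) := by
      intro x hx
      have hx0 : (0:ℝ) < x := hR.trans hx
      rw [hF]
      gcongr Cβ ^ 2 * ?_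
      have h1 : x ^ (-β) = (x ^ 2) ^ (-β / 2) := by
        rw [← Real.rpow_natCast x 2, ← Real.rpow_mul hx0.le]
        ring_nf
      rw [h1]
      exact Real.rpow_le_rpow_of_nonpos (by positivity) (by nlinarith) (by linarith)
    calc ∫ v in Ioi R, F v ≤ ∫ x in Ioi R, Cβ ^ 2 * x ^ (-β) :=
          setIntegral_mono_on Fint.integrableOn hint measurableSet_Ioi hmono
      _ = Cβ ^ 2 * ∫ x in Ioi R, x ^ (-β) := by rw [integral_const_mul]
      _ = Cβ ^ 2 * (-R ^ (-β + 1) / (-β + 1)) := by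
          rw [integral_Ioi_rpow_of_lt (by linarith) hR]
      _ = Cβ ^ 2 / (β - 1) * R ^ (1 - β) := by
          rw [show (-β : ℝ) + 1 = 1 - β by ring]
          rw [div_eq_mul_inv, div_eq_mul_inv]
          have h2 : (1 - β : ℝ)⁻¹ = -(β - 1)⁻¹ := by
            rw [show (1:ℝ) - β = -(β-1) by ring, inv_neg]
          rw [h2]; ring
  -- two-sided tail bound
  have tail : ∀ R : ℝ, 0 < R →
      ∫ v in (Icc (-R) R)ᶜ, F v ≤ 2 * Cβ ^ 2 / (β - 1) * R ^ (1 - β) := by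
    intro R hR
    have hc : (Icc (-R) R)ᶜ = Iio (-R) ∪ Ioi R := by
      ext x
      simp only [mem_compl_iff, mem_Icc, not_and_or, not_le, mem_union, mem_Iio, mem_Ioi]
    have hd : Disjoint (Iio (-R)) (Ioi R) := by
      apply Set.disjoint_left.mpr
      intro x hx hx'
      simp only [mem_Iio, mem_Ioi] at hx hx'
      linarith
    have heven : ∫ v in Iio (-R), F v = ∫ v in Ioi R, F v := by
      rw [← integral_Iic_eq_integral_Iio, ← integral_comp_neg_Ioi]
      congr 1
      ext x
      rw [hF, hF]
      ring_nf
    rw [hc, setIntegral_union hd measurableSet_Ioi Fint.integrableOn Fint.integrableOn, heven]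
    have ht1 := tail1 R hR
    have h2 : 2 * Cβ ^ 2 / (β - 1) * R ^ (1 - β) = 2 * (Cβ ^ 2 / (β - 1) * R ^ (1 - β)) := by
      ring
    rw [h2]
    linarith
  -- the constant
  refine ⟨2 + 6 * Cβ ^ 2 / (β - 1), ?_, ?_⟩
  · have : 0 < 6 * Cβ ^ 2 / (β - 1) := div_pos (by positivity) (by linarith)
    linarith
  intro h hC1 hBdd hmean
  obtain ⟨B, hB⟩ := hBdd
  have hcont : Continuous h := hC1.continuous
  set C : ℝ := 2 + 6 * Cβ ^ 2 / (β - 1) with hCdef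
  have hC0 : 0 < C := by
    have : 0 < 6 * Cβ ^ 2 / (β - 1) := div_pos (by positivity) (by linarith)
    rw [hCdef]; linarith
  have hθnn : (0:ℝ) ≤ (β - 1) / (β + 1) := div_nonneg (by linarith) (by linarith)
  have hθpos : (0:ℝ) < (β - 1) / (β + 1) := div_pos (by linarith) (by linarith)
  have hqnn : (0:ℝ) ≤ 4 / (β + 1) := div_nonneg (by norm_num) (by linarith)
  -- trivial case h ≡ 0
  by_cases hzero : ∀ v, h v = 0
  · have : ∀ v : ℝ, ENNReal.ofReal (h v ^ 2 * F v) = 0 := by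
      intro v
      rw [hzero v]
      norm_num
    rw [show (fun v => ENNReal.ofReal (h v ^ 2 * F v)) = fun _ => (0:ℝ≥0∞) from funext this]
    rw [lintegral_const 0, zero_mul]
    exact zero_le
  push_neg at hzero
  obtain ⟨v₀, hv₀⟩ := hzero
  -- the real supremum
  have hbdd : BddAbove (range fun v => |h v|) := ⟨B, by rintro x ⟨v, rfl⟩; exact hB v⟩
  set Sr := ⨆ v, |h v| with hSrdef
  have hSr_ge : ∀ v, |h v| ≤ Sr := fun v => le_ciSup hbdd v
  have hSrpos : 0 < Sr := lt_of_lt_of_le (abs_pos.mpr hv₀) (hSr_ge v₀)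
  have hSup_eq : (⨆ v : ℝ, ENNReal.ofReal |h v|) = ENNReal.ofReal Sr := by
    apply le_antisymm
    · exact iSup_le fun v => ENNReal.ofReal_le_ofReal (hSr_ge v)
    · apply ENNReal.le_of_forall_pos_le_add
      intro ε hε _
      obtain ⟨v, hv⟩ : ∃ i : ℝ, Sr - (ε:ℝ) < |h i| := by
        apply exists_lt_of_lt_ciSup
        have : (0:ℝ) < ε := hε
        rw [← hSrdef]
        linarith
      calc ENNReal.ofReal Sr ≤ ENNReal.ofReal (|h v| + (ε:ℝ)) :=
            ENNReal.ofReal_le_ofReal (by linarith)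
        _ ≤ ENNReal.ofReal |h v| + ENNReal.ofReal (ε:ℝ) := ENNReal.ofReal_add_le
        _ ≤ (⨆ v : ℝ, ENNReal.ofReal |h v|) + ε := by
            apply add_le_add (le_iSup (fun v => ENNReal.ofReal |h v|) v)
            rw [ENNReal.ofReal_coe_nnreal]
  rw [hSup_eq]
  -- case: infinite Dirichlet lintegral
  by_cases hD : (∫⁻ v : ℝ, ENNReal.ofReal (deriv h v ^ 2 * F v)) = ⊤
  · rw [hD, ENNReal.top_rpow_of_pos hθpos]
    have h1 : ENNReal.ofReal C ≠ 0 := (ENNReal.ofReal_pos.mpr hC0).ne'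
    have h2 : (ENNReal.ofReal Sr) ^ (4 / (β + 1)) ≠ 0 :=
      (ENNReal.rpow_pos (ENNReal.ofReal_pos.mpr hSrpos) ENNReal.ofReal_ne_top).ne'
    rw [ENNReal.mul_top h1, ENNReal.top_mul h2]
    exact le_top
  -- case: finite Dirichlet lintegral
  have hDnnpt : ∀ v : ℝ, 0 ≤ deriv h v ^ 2 * F v :=
    fun v => mul_nonneg (sq_nonneg _) (Fpos v).le
  have hDmeas : Continuous (fun v => deriv h v ^ 2 * F v) :=
    ((hC1.continuous_deriv le_rfl).pow 2).mul Fcont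
  have Dint : Integrable (fun v => deriv h v ^ 2 * F v) := by
    refine ⟨hDmeas.aestronglyMeasurable, ?_⟩
    rw [hasFiniteIntegral_iff_norm]
    have : ∀ v : ℝ, ENNReal.ofReal ‖deriv h v ^ 2 * F v‖ =
        ENNReal.ofReal (deriv h v ^ 2 * F v) := by
      intro v
      rw [Real.norm_eq_abs, abs_of_nonneg (hDnnpt v)]
    rw [funext this]
    exact lt_top_iff_ne_top.mpr hD
  have int_h2F : Integrable (fun v => h v ^ 2 * F v) := by
    apply Fint.bdd_mul (c := Sr ^ 2) ((hcont.pow 2).aestronglyMeasurable)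
    refine Filter.Eventually.of_forall fun v => ?_
    rw [Real.norm_eq_abs, Pi.pow_apply, abs_pow, sq_abs, ← sq_abs (h v)]
    exact pow_le_pow_left₀ (abs_nonneg _) (hSr_ge v) 2
  have hLeq : (∫⁻ v : ℝ, ENNReal.ofReal (h v ^ 2 * F v))
      = ENNReal.ofReal (∫ v, h v ^ 2 * F v) :=
    (ofReal_integral_eq_lintegral_ofReal int_h2F
      (Filter.Eventually.of_forall fun v => mul_nonneg (sq_nonneg _) (Fpos v).le)).symm
  have hDeq : (∫⁻ v : ℝ, ENNReal.ofReal (deriv h v ^ 2 * F v))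
      = ENNReal.ofReal (∫ v, deriv h v ^ 2 * F v) :=
    (ofReal_integral_eq_lintegral_ofReal Dint
      (Filter.Eventually.of_forall hDnnpt)).symm
  rw [hLeq, hDeq]
  have hDnn : 0 ≤ ∫ v, deriv h v ^ 2 * F v :=
    integral_nonneg hDnnpt
  have core := stmt17_core β hβ Cβ hCβ F hF Fcont Fpos Fint hprob tail
    h hC1 Sr hSrpos.le hSr_ge Dint hmean
  calc ENNReal.ofReal (∫ v, h v ^ 2 * F v)
      ≤ ENNReal.ofReal (C * (∫ v, deriv h v ^ 2 * F v) ^ ((β - 1) / (β + 1))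
          * Sr ^ (4 / (β + 1))) := ENNReal.ofReal_le_ofReal core
    _ = ENNReal.ofReal C * ENNReal.ofReal ((∫ v, deriv h v ^ 2 * F v) ^ ((β - 1) / (β + 1)))
          * ENNReal.ofReal (Sr ^ (4 / (β + 1))) := by
        rw [ENNReal.ofReal_mul (mul_nonneg hC0.le (Real.rpow_nonneg hDnn _)),
          ENNReal.ofReal_mul hC0.le]
    _ = ENNReal.ofReal C * ENNReal.ofReal (∫ v, deriv h v ^ 2 * F v) ^ ((β - 1) / (β + 1))
          * ENNReal.ofReal Sr ^ (4 / (β + 1)) := by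
        rw [ENNReal.ofReal_rpow_of_nonneg hDnn hθnn,
          ENNReal.ofReal_rpow_of_nonneg hSrpos.le hqnn]
end

section
/- Define f(μ) = cos(πμ/2) · Γ(1−μ)/Γ(1+μ) for real μ. Then f(μ) > 0 for every μ ∈ (2/3, 2) with μ ≠ 1, the limit lim_{μ→1} f(μ) exists and equals π/2, and lim_{μ→2⁻} f(μ) = +∞. -/
open Set Filter

private lemma cos_ne_zero_aux {μ : ℝ} (h0 : 0 < μ) (h2 : μ < 2) (h1 : μ ≠ 1) :
    Real.cos (Real.pi * μ / 2) ≠ 0 := by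
  have hπ := Real.pi_pos
  rcases lt_or_gt_of_ne h1 with h | h
  · have : 0 < Real.cos (Real.pi * μ / 2) := by
      apply Real.cos_pos_of_mem_Ioo
      constructor <;> [nlinarith; nlinarith]
    exact this.ne'
  · have : Real.cos (Real.pi * μ / 2) < 0 := by
      apply Real.cos_neg_of_pi_div_two_lt_of_lt <;> nlinarith
    exact this.ne

private lemma sin_pos_aux {μ : ℝ} (h0 : 0 < μ) (h2 : μ < 2) :
    0 < Real.sin (Real.pi * μ / 2) := by
  have hπ := Real.pi_pos
  apply Real.sin_pos_of_pos_of_lt_pi <;> nlinarith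

private lemma key {μ : ℝ} (h0 : 0 < μ) (h2 : μ < 2) (h1 : μ ≠ 1) :
    Real.cos (Real.pi * μ / 2) * (Real.Gamma (1 - μ) / Real.Gamma (1 + μ)) =
      Real.pi / (2 * μ * Real.sin (Real.pi * μ / 2) * Real.Gamma μ ^ 2) := by
  have hΓ : 0 < Real.Gamma μ := Real.Gamma_pos_of_pos h0
  have hcos := cos_ne_zero_aux h0 h2 h1
  have hsin := sin_pos_aux h0 h2
  have hsin2 : Real.sin (Real.pi * μ) =
      2 * Real.sin (Real.pi * μ / 2) * Real.cos (Real.pi * μ / 2) := by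
    rw [← Real.sin_two_mul]; ring_nf
  have hadd : Real.Gamma (1 + μ) = μ * Real.Gamma μ := by
    rw [add_comm, Real.Gamma_add_one h0.ne']
  have hrefl := Real.Gamma_mul_Gamma_one_sub μ
  rw [hsin2] at hrefl
  have hΓ1μ : Real.Gamma (1 - μ) =
      Real.pi / (2 * Real.sin (Real.pi * μ / 2) * Real.cos (Real.pi * μ / 2) * Real.Gamma μ) := by
    field_simp at hrefl ⊢
    linarith [hrefl]
  rw [hadd, hΓ1μ]
  field_simp

/-- For `f(μ) = cos(πμ/2) Γ(1−μ)/Γ(1+μ)`: `f > 0` on `(2/3,2) \ {1}`,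
`f(μ) → π/2` as `μ → 1`, and `f(μ) → +∞` as `μ → 2⁻`. -/
theorem stmt18
    (f : ℝ → ℝ)
    (hf : ∀ μ : ℝ, f μ = Real.cos (Real.pi * μ / 2) * (Real.Gamma (1 - μ) / Real.Gamma (1 + μ))) :
    (∀ μ ∈ Ioo (2 / 3 : ℝ) 2, μ ≠ 1 → 0 < f μ)
    ∧ Tendsto f (nhdsWithin 1 {(1 : ℝ)}ᶜ) (nhds (Real.pi / 2))
    ∧ Tendsto f (nhdsWithin 2 (Iio 2)) atTop := by
  have hπ := Real.pi_pos
  set g : ℝ → ℝ := fun μ => Real.pi / (2 * μ * Real.sin (Real.pi * μ / 2) * Real.Gamma μ ^ 2)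
    with hg
  have hfg : ∀ μ : ℝ, 0 < μ → μ < 2 → μ ≠ 1 → f μ = g μ := by
    intro μ h0 h2 h1
    rw [hf μ, key h0 h2 h1]
  have hΓcont : ∀ s : ℝ, 0 < s → ContinuousAt Real.Gamma s := by
    intro s hs
    refine (Real.differentiableAt_Gamma fun m => ?_).continuousAt
    intro h
    have : (0:ℝ) ≤ m := Nat.cast_nonneg m
    rw [h] at hs; linarith
  have hdenom_cont : ∀ s : ℝ, 0 < s →
      ContinuousAt (fun μ : ℝ => 2 * μ * Real.sin (Real.pi * μ / 2) * Real.Gamma μ ^ 2) s := by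
    intro s hs
    exact (((continuousAt_const.mul continuousAt_id).mul
      (Real.continuous_sin.continuousAt.comp
        ((continuous_const.mul continuous_id).div_const 2).continuousAt)).mul
      ((hΓcont s hs).pow 2))
  refine ⟨?_, ?_, ?_⟩
  · intro μ hμ h1
    have h0 : 0 < μ := by linarith [hμ.1]
    rw [hfg μ h0 hμ.2 h1, hg]
    have hΓ : 0 < Real.Gamma μ := Real.Gamma_pos_of_pos h0
    have hsin := sin_pos_aux h0 hμ.2
    positivity
  · have hcont : ContinuousAt g 1 := by
      refine ContinuousAt.div continuousAt_const (hdenom_cont 1 one_pos) ?_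
      simp [Real.Gamma_one, Real.sin_pi_div_two, mul_one_div]
    have hg1 : g 1 = Real.pi / 2 := by
      simp [hg, Real.Gamma_one, mul_one_div, Real.sin_pi_div_two]
    have htend : Tendsto g (nhdsWithin 1 {(1:ℝ)}ᶜ) (nhds (Real.pi / 2)) := by
      rw [← hg1]
      exact hcont.continuousWithinAt.tendsto
    refine htend.congr' ?_
    have hmem : Ioo (0:ℝ) 2 ∈ nhdsWithin 1 {(1:ℝ)}ᶜ :=
      nhdsWithin_le_nhds (Ioo_mem_nhds one_pos one_lt_two)
    filter_upwards [hmem, self_mem_nhdsWithin] with μ hμ h1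
    exact (hfg μ hμ.1 hμ.2 h1).symm
  · have hdenom : Tendsto (fun μ : ℝ => 2 * μ * Real.sin (Real.pi * μ / 2) * Real.Gamma μ ^ 2)
        (nhdsWithin 2 (Iio 2)) (nhdsWithin 0 (Ioi 0)) := by
      rw [tendsto_nhdsWithin_iff]
      constructor
      · have := ((hdenom_cont 2 two_pos).continuousWithinAt (s := Iio 2)).tendsto
        simpa [Real.sin_pi] using this
      · have hmem : Ioo (0:ℝ) 2 ∈ nhdsWithin 2 (Iio 2) := by
          rw [mem_nhdsWithin]
          exact ⟨Ioi 0, isOpen_Ioi, mem_Ioi.mpr two_pos, fun x hx => ⟨hx.1, hx.2⟩⟩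
        filter_upwards [hmem] with μ hμ
        have hΓ : 0 < Real.Gamma μ := Real.Gamma_pos_of_pos hμ.1
        have hsin := sin_pos_aux hμ.1 hμ.2
        exact mul_pos (mul_pos (by linarith [hμ.1] : (0:ℝ) < 2 * μ) hsin) (pow_pos hΓ 2)
    have hinv : Tendsto
        (fun μ : ℝ => (2 * μ * Real.sin (Real.pi * μ / 2) * Real.Gamma μ ^ 2)⁻¹)
        (nhdsWithin 2 (Iio 2)) atTop := tendsto_inv_nhdsGT_zero.comp hdenom
    have hgt : Tendsto g (nhdsWithin 2 (Iio 2)) atTop := by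
      have := hinv.const_mul_atTop hπ
      simpa [hg, div_eq_mul_inv] using this
    refine hgt.congr' ?_
    have hmem : Ioo (1:ℝ) 2 ∈ nhdsWithin 2 (Iio 2) := by
      rw [mem_nhdsWithin]
      exact ⟨Ioi 1, isOpen_Ioi, mem_Ioi.mpr one_lt_two, fun x hx => ⟨hx.1, hx.2⟩⟩
    filter_upwards [hmem] with μ hμ
    exact (hfg μ (by linarith [hμ.1]) hμ.2 (by linarith [hμ.1])).symm
end
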